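/- arXiv:1912.07279 — 2 statements merged into one kernel-verified Lean document; each statement's English description precedes it below -/
import Mathlib

section
/- Let 𝒜 be an S-ring over a group G of prime order p. Suppose that p ≤ 3 or rk(𝒜) > 2. Then Aut(𝒜) is 2-isolated: every subgroup K ≤ Sym(G) that has the same orbits on G × G as Aut(𝒜) is equal to Aut(𝒜). -/
open scoped Pointwise

/-- The number of representations of `z` as `x * y` with `x ∈ X`, `y ∈ Y`
(used for the structure constants of an S-ring). -/
def structConst {G : Type*} [Group G] [DecidableEq G] (X Y : Finset G) (z : G) : ℕ :=
  ((X ×ˢ Y).filter (fun q => q.1 * q.2 = z)).card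

/-- An S-ring (Schur ring) over a finite group `G`, given by its partition into basic sets:
the partition contains `{1}`, is closed under inversion, and the products of the
characteristic sums of two blocks are integral linear combinations of characteristic sums,
i.e. the number of representations `z = x * y` (`x ∈ X`, `y ∈ Y`) is constant for `z`
ranging over a block `Z`. -/
structure SRing (G : Type*) [Group G] [Fintype G] [DecidableEq G] where
  basicSets : Finset (Finset G)
  nonempty_mem : ∀ X ∈ basicSets, X.Nonempty
  exists_mem : ∀ g : G, ∃ X ∈ basicSets, g ∈ X
  disj : ∀ X ∈ basicSets, ∀ Y ∈ basicSets, X ≠ Y → Disjoint X Y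
  one_mem : ({1} : Finset G) ∈ basicSets
  inv_mem : ∀ X ∈ basicSets, X.image (fun x => x⁻¹) ∈ basicSets
  structConst_eq : ∀ X ∈ basicSets, ∀ Y ∈ basicSets, ∀ Z ∈ basicSets,
    ∀ z ∈ Z, ∀ z' ∈ Z, structConst X Y z = structConst X Y z'

namespace SRing

variable {G G' : Type*} [Group G] [Fintype G] [DecidableEq G]
  [Group G'] [Fintype G'] [DecidableEq G']

/-- An algebraic isomorphism between S-rings: a bijection between the sets of basic sets
preserving the structure constants. -/
def IsAlgIso (A : SRing G) (B : SRing G') (φ : Finset G → Finset G') : Prop :=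
  Set.BijOn φ (A.basicSets : Set (Finset G)) (B.basicSets : Set (Finset G')) ∧
  ∀ X ∈ A.basicSets, ∀ Y ∈ A.basicSets, ∀ Z ∈ A.basicSets,
    ∀ z ∈ Z, ∀ z' ∈ φ Z, structConst X Y z = structConst (φ X) (φ Y) z'

/-- `φ` is induced by the bijection `f : G → G'` if `R(X)^f = R(X^φ)` for every basic set `X`,
where `R(X) = {(g, xg) : x ∈ X, g ∈ G}`; equivalently (for bijective `f`),
`h * g⁻¹ ∈ X ↔ f h * (f g)⁻¹ ∈ φ X` for all `g h`. -/
def Induces (A : SRing G) (B : SRing G') (φ : Finset G → Finset G') (f : G → G') : Prop :=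
  Function.Bijective f ∧
  ∀ X ∈ A.basicSets, ∀ g h : G, h * g⁻¹ ∈ X ↔ f h * (f g)⁻¹ ∈ φ X

/-- Separability with respect to the class of all finite abelian groups. -/
def SeparableA (A : SRing G) : Prop :=
  ∀ (H : Type) [CommGroup H] [Fintype H] [DecidableEq H],
    ∀ (B : SRing H) (φ : Finset G → Finset H),
      A.IsAlgIso B φ → ∃ f : G → H, A.Induces B φ f

/-- `X` is an `A`-set: a union of basic sets of `A`. -/
def IsASet (A : SRing G) (X : Finset G) : Prop :=
  ∀ Y ∈ A.basicSets, (Y ∩ X).Nonempty → Y ⊆ X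

end SRing
namespace SRing

variable {G : Type*} [Group G] [Fintype G] [DecidableEq G]

/-- The automorphism group of an S-ring: all permutations `f` of `G` with
`R(X)^f = R(X)` for every basic set `X`. -/
def autPerm (A : SRing G) : Subgroup (Equiv.Perm G) where
  carrier := {f | ∀ X ∈ A.basicSets, ∀ g h : G, h * g⁻¹ ∈ X ↔ f h * (f g)⁻¹ ∈ X}
  one_mem' := by intro X hX g h; simp
  mul_mem' := by
    intro a b ha hb X hX g h
    rw [Equiv.Perm.mul_apply, Equiv.Perm.mul_apply]
    exact (hb X hX g h).trans (ha X hX (b g) (b h))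
  inv_mem' := by
    intro f hf X hX g h
    have h2 := hf X hX (f⁻¹ g) (f⁻¹ h)
    simp only [Equiv.Perm.coe_inv, Equiv.apply_symm_apply] at h2
    exact h2.symm

end SRing

/-- The group of right translations `x ↦ x * h` inside `Sym(G)`. -/
def rightTranslations (G : Type*) [Group G] : Subgroup (Equiv.Perm G) where
  carrier := {f | ∃ h : G, ∀ x : G, f x = x * h}
  one_mem' := ⟨1, by simp⟩
  mul_mem' := by
    rintro a b ⟨h1, ha⟩ ⟨h2, hb⟩
    exact ⟨h2 * h1, fun x => by rw [Equiv.Perm.mul_apply, hb, ha, mul_assoc]⟩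
  inv_mem' := by
    rintro f ⟨h, hf⟩
    refine ⟨h⁻¹, fun x => ?_⟩
    have : f (x * h⁻¹) = x := by rw [hf, inv_mul_cancel_right]
    calc f⁻¹ x = f⁻¹ (f (x * h⁻¹)) := by rw [this]
    _ = x * h⁻¹ := by simp

/-- For `Δ` a set of permutations of `U` and `N ⊴ U`, the induced set `Δ^S` of permutations of
the section `S = U/N`, consisting of the maps induced by those elements of `Δ` that permute
the `N`-cosets. -/
def sectionAut {U : Type*} [Group U] (N : Subgroup U) [N.Normal]
    (Δ : Set (Equiv.Perm U)) : Set (Equiv.Perm (U ⧸ N)) :=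
  {σ | ∃ f ∈ Δ,
    (∀ u v : U, (QuotientGroup.mk u : U ⧸ N) = QuotientGroup.mk v →
      (QuotientGroup.mk (f u) : U ⧸ N) = QuotientGroup.mk (f v)) ∧
    ∀ u : U, σ (QuotientGroup.mk u) = QuotientGroup.mk (f u)}

namespace StmtAux

open Finset

variable {G : Type} [Group G] [Fintype G] [DecidableEq G]

theorem block_eq (A : SRing G) {X Y : Finset G} (hX : X ∈ A.basicSets) (hY : Y ∈ A.basicSets)
    {g : G} (hgX : g ∈ X) (hgY : g ∈ Y) : X = Y := by
  by_contra hne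
  exact Finset.disjoint_left.mp (A.disj X hX Y hY hne) hgX hgY

theorem block_one (A : SRing G) {X : Finset G} (hX : X ∈ A.basicSets)
    (h1 : (1 : G) ∈ X) : X = {1} :=
  block_eq A hX A.one_mem h1 (Finset.mem_singleton_self 1)

theorem isASet_block (A : SRing G) {X : Finset G} (hX : X ∈ A.basicSets) : A.IsASet X := by
  intro Y hY ⟨g, hg⟩
  rw [Finset.mem_inter] at hg
  rw [block_eq A hY hX hg.1 hg.2]

/-- representative of a finset -/
noncomputable def rep (Z : Finset G) : G := if h : Z.Nonempty then h.choose else 1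

theorem rep_mem {Z : Finset G} (h : Z.Nonempty) : rep Z ∈ Z := by
  rw [rep, dif_pos h]; exact h.choose_spec

section Conv

variable (q : ℕ) [Fact q.Prime]

noncomputable def indic (X : Finset G) : MonoidAlgebra (ZMod q) G :=
  ∑ x ∈ X, MonoidAlgebra.single x 1

theorem indic_apply (X : Finset G) (g : G) : (indic q X).coeff g = if g ∈ X then 1 else 0 := by
  rw [indic, MonoidAlgebra.coeff_sum, Finsupp.finset_sum_apply]
  simp [Finsupp.single_apply]

theorem mul_indic_apply (X Y : Finset G) (g : G) :
    (indic q X * indic q Y).coeff g = (structConst X Y g : ZMod q) := by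
  rw [indic, indic, Finset.sum_mul_sum]
  simp_rw [MonoidAlgebra.single_mul_single, one_mul]
  rw [structConst, Finset.card_filter]
  push_cast
  rw [Finset.sum_product]
  rw [MonoidAlgebra.coeff_sum, Finsupp.finset_sum_apply]
  refine Finset.sum_congr rfl fun x hx => ?_
  rw [MonoidAlgebra.coeff_sum, Finsupp.finset_sum_apply]
  refine Finset.sum_congr rfl fun y hy => ?_
  simp [Finsupp.single_apply]

/-- coefficients constant on each basic set -/
def BlockConst (A : SRing G) (w : MonoidAlgebra (ZMod q) G) : Prop :=
  ∀ Z ∈ A.basicSets, ∀ z ∈ Z, ∀ z' ∈ Z, w.coeff z = w.coeff z'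

theorem blockConst_indic (A : SRing G) {X : Finset G} (hX : X ∈ A.basicSets) :
    BlockConst q A (indic q X) := by
  intro Z hZ z hz z' hz'
  rw [indic_apply, indic_apply]
  by_cases hZX : Z = X
  · subst hZX; rw [if_pos hz, if_pos hz']
  · rw [if_neg fun hzx => hZX (block_eq A hZ hX hz hzx),
      if_neg fun hzx => hZX (block_eq A hZ hX hz' hzx)]

theorem blockConst_mul_indic (A : SRing G) {X Y : Finset G} (hX : X ∈ A.basicSets)
    (hY : Y ∈ A.basicSets) : BlockConst q A (indic q X * indic q Y) := by
  intro Z hZ z hz z' hz'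
  rw [mul_indic_apply, mul_indic_apply,
    A.structConst_eq X hX Y hY Z hZ z hz z' hz']

theorem blockConst_repr (A : SRing G) {w : MonoidAlgebra (ZMod q) G}
    (hw : BlockConst q A w) :
    w = ∑ Z ∈ A.basicSets, w.coeff (rep Z) • indic q Z := by
  ext g
  rw [MonoidAlgebra.coeff_sum, Finsupp.finset_sum_apply]
  obtain ⟨Z₀, hZ₀, hgZ₀⟩ := A.exists_mem g
  rw [Finset.sum_eq_single Z₀]
  · rw [MonoidAlgebra.coeff_smul, Finsupp.smul_apply, indic_apply, if_pos hgZ₀, smul_eq_mul, mul_one]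
    exact (hw Z₀ hZ₀ _ (rep_mem (A.nonempty_mem Z₀ hZ₀)) g hgZ₀).symm
  · intro Z hZ hne
    rw [MonoidAlgebra.coeff_smul, Finsupp.smul_apply, indic_apply,
      if_neg fun hgZ => hne (block_eq A hZ hZ₀ hgZ hgZ₀), smul_zero]
  · intro habs; exact absurd hZ₀ habs

theorem blockConst_sum (A : SRing G) {ι : Type} (s : Finset ι)
    (f : ι → MonoidAlgebra (ZMod q) G) (hf : ∀ i ∈ s, BlockConst q A (f i)) :
    BlockConst q A (∑ i ∈ s, f i) := by
  intro Z hZ z hz z' hz'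
  rw [MonoidAlgebra.coeff_sum, Finsupp.finset_sum_apply, Finsupp.finset_sum_apply]
  exact Finset.sum_congr rfl fun i hi => hf i hi Z hZ z hz z' hz'

theorem blockConst_smul (A : SRing G) (c : ZMod q) {w : MonoidAlgebra (ZMod q) G}
    (hw : BlockConst q A w) : BlockConst q A (c • w) := by
  intro Z hZ z hz z' hz'
  rw [MonoidAlgebra.coeff_smul, Finsupp.smul_apply, Finsupp.smul_apply, hw Z hZ z hz z' hz']

theorem blockConst_mul (A : SRing G) {w₁ w₂ : MonoidAlgebra (ZMod q) G}
    (h₁ : BlockConst q A w₁) (h₂ : BlockConst q A w₂) :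
    BlockConst q A (w₁ * w₂) := by
  rw [blockConst_repr q A h₁, blockConst_repr q A h₂, Finset.sum_mul_sum]
  refine blockConst_sum q A _ _ fun X hX => blockConst_sum q A _ _ fun Y hY => ?_
  rw [smul_mul_assoc, mul_smul_comm]
  exact blockConst_smul q A _ (blockConst_smul q A _ (blockConst_mul_indic q A hX hY))

theorem blockConst_pow (A : SRing G) {X : Finset G} (hX : X ∈ A.basicSets) (n : ℕ) :
    BlockConst q A (indic q X ^ n) := by
  induction n with
  | zero =>
      rw [pow_zero]
      have h1 : (1 : MonoidAlgebra (ZMod q) G) = indic q {1} := by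
        rw [indic, Finset.sum_singleton]; rfl
      rw [h1]
      exact blockConst_indic q A A.one_mem
  | succ n ih =>
      rw [pow_succ]
      exact blockConst_mul q A ih (blockConst_indic q A hX)

theorem indic_pow_prime (hc : ∀ x y : G, x * y = y * x) (X : Finset G) :
    indic q X ^ q = ∑ x ∈ X, MonoidAlgebra.single (x ^ q) (1 : ZMod q) := by
  letI : CommGroup G := { (inferInstance : Group G) with mul_comm := hc }
  letI : CharP (MonoidAlgebra (ZMod q) G) q :=
    charP_of_injective_ringHom (R := ZMod q)
      (f := MonoidAlgebra.singleOneRingHom (R := ZMod q) (M := G))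
      (fun a b hab => Finsupp.single_injective 1 (congrArg MonoidAlgebra.coeff hab)) q
  rw [indic, sum_pow_char]
  exact Finset.sum_congr rfl fun x _ => by rw [MonoidAlgebra.single_pow, one_pow]

theorem indic_pow_prime_apply (hc : ∀ x y : G, x * y = y * x)
    (hinj : Function.Injective fun x : G => x ^ q) (X : Finset G) (g : G) :
    (indic q X ^ q).coeff g = if g ∈ X.image (· ^ q) then 1 else 0 := by
  rw [indic_pow_prime q hc X, MonoidAlgebra.coeff_sum, Finsupp.finset_sum_apply]
  by_cases hg : g ∈ X.image (· ^ q)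
  · rw [if_pos hg]
    obtain ⟨x₀, hx₀, hx₀g⟩ := Finset.mem_image.mp hg
    rw [Finset.sum_eq_single x₀]
    · rw [hx₀g, MonoidAlgebra.single_apply, if_pos rfl]
    · intro x hx hne
      rw [MonoidAlgebra.single_apply, if_neg]
      intro hxg
      exact hne (hinj (hxg.trans hx₀g.symm))
    · intro habs; exact absurd hx₀ habs
  · rw [if_neg hg, Finset.sum_eq_zero]
    intro x hx
    rw [MonoidAlgebra.single_apply, if_neg]
    intro hxg
    exact hg (Finset.mem_image.mpr ⟨x, hx, hxg⟩)

theorem isASet_image_pow_prime (A : SRing G) (hc : ∀ x y : G, x * y = y * x)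
    (hinj : Function.Injective fun x : G => x ^ q) {X : Finset G}
    (hX : X ∈ A.basicSets) : A.IsASet (X.image (· ^ q)) := by
  intro Z hZ ⟨z, hz⟩
  rw [Finset.mem_inter] at hz
  intro z' hz'
  have h := blockConst_pow q A hX q Z hZ z hz.1 z' hz'
  rw [indic_pow_prime_apply q hc hinj, indic_pow_prime_apply q hc hinj,
    if_pos hz.2] at h
  by_contra hmem
  rw [if_neg hmem] at h
  exact one_ne_zero h

end Conv

end StmtAux

namespace StmtAux

open Finset

variable {G : Type} [Group G] [Fintype G] [DecidableEq G]

theorem pow_inj {n : ℕ} (hn : n.Coprime (Fintype.card G)) :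
    Function.Injective fun x : G => x ^ n := by
  have h : (Nat.card G).Coprime n := by
    rw [Nat.card_eq_fintype_card, Nat.coprime_comm]; exact hn
  intro a b hab
  exact (powCoprime h).injective (by simpa [powCoprime] using hab)

theorem isASet_image_pow_prime' (q : ℕ) [Fact q.Prime] (A : SRing G)
    (hc : ∀ x y : G, x * y = y * x)
    (hinj : Function.Injective fun x : G => x ^ q) {S : Finset G}
    (hS : A.IsASet S) : A.IsASet (S.image (· ^ q)) := by
  intro Z hZ ⟨z, hz⟩
  rw [Finset.mem_inter] at hz
  obtain ⟨s, hsS, hsz⟩ := Finset.mem_image.mp hz.2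
  obtain ⟨Zs, hZs, hsZs⟩ := A.exists_mem s
  have hZsS : Zs ⊆ S := hS Zs hZs ⟨s, Finset.mem_inter.mpr ⟨hsZs, hsS⟩⟩
  have hT := isASet_image_pow_prime q A hc hinj hZs
  have hzT : z ∈ Zs.image (· ^ q) := hsz ▸ Finset.mem_image_of_mem _ hsZs
  have hZT : Z ⊆ Zs.image (· ^ q) :=
    hT Z hZ ⟨z, Finset.mem_inter.mpr ⟨hz.1, hzT⟩⟩
  exact hZT.trans (Finset.image_subset_image hZsS)

theorem isASet_image_pow (p : ℕ) (hp : p.Prime) (hcard : Fintype.card G = p)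
    (A : SRing G) (hc : ∀ x y : G, x * y = y * x) :
    ∀ n : ℕ, 0 < n → n.Coprime p → ∀ S : Finset G, A.IsASet S →
      A.IsASet (S.image (· ^ n)) := by
  intro n
  induction n using Nat.strong_induction_on with
  | _ n ih =>
    intro hn0 hnp S hS
    by_cases h1 : n = 1
    · subst h1
      simpa only [pow_one, Finset.image_id'] using hS
    · set qq := n.minFac with hqq
      have hq : qq.Prime := Nat.minFac_prime h1
      obtain ⟨m, hm⟩ := n.minFac_dvd
      have hm0 : 0 < m := by
        rcases Nat.eq_zero_or_pos m with h | h
        · exfalso; rw [h, mul_zero] at hm; exact hn0.ne' hm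
        · exact h
      have hmn : m < n := by
        rw [hm]
        calc m = 1 * m := (one_mul m).symm
        _ < qq * m := (Nat.mul_lt_mul_right hm0).mpr hq.one_lt
      have hmp : m.Coprime p :=
        Nat.Coprime.coprime_dvd_left ⟨qq, by rw [hm, mul_comm]⟩ hnp
      have hqp : qq.Coprime p := Nat.Coprime.coprime_dvd_left n.minFac_dvd hnp
      haveI : Fact qq.Prime := ⟨hq⟩
      have hinj : Function.Injective fun x : G => x ^ qq :=
        pow_inj (by rwa [hcard])
      have hS' : A.IsASet (S.image (· ^ m)) := ih m hmn hm0 hmp S hS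
      have himg : S.image (· ^ n) = (S.image (· ^ m)).image (· ^ qq) := by
        rw [Finset.image_image]
        apply Finset.image_congr
        intro x _
        simp only [Function.comp_apply]
        rw [hm, mul_comm, pow_mul]
      rw [himg]
      exact isASet_image_pow_prime' qq A hc hinj hS'

theorem exists_pow_eq (p : ℕ) (hp : p.Prime) (hcard : Fintype.card G = p)
    {a c : G} (ha : a ≠ 1) (hc1 : c ≠ 1) :
    ∃ n : ℕ, 0 < n ∧ n.Coprime p ∧ a ^ n = c := by
  have hoa : orderOf a = p := by
    have hdvd : orderOf a ∣ p := hcard ▸ orderOf_dvd_card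
    rcases (Nat.Prime.eq_one_or_self_of_dvd hp _ hdvd) with h | h
    · exact absurd (orderOf_eq_one_iff.mp h) ha
    · exact h
  have hp0 : (0 : ℤ) < (p : ℤ) := Int.natCast_pos.mpr hp.pos
  have htop : Subgroup.zpowers a = ⊤ := by
    apply Subgroup.eq_top_of_card_eq
    rw [Nat.card_zpowers, hoa, Nat.card_eq_fintype_card, hcard]
  obtain ⟨k, hk⟩ : ∃ k : ℤ, a ^ k = c :=
    Subgroup.mem_zpowers_iff.mp (htop ▸ Subgroup.mem_top c)
  have hk' : a ^ (k % (p : ℤ)) = c := by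
    rw [← hoa] at *
    rw [zpow_mod_orderOf, hk]
  have hnn : 0 ≤ k % (p : ℤ) := Int.emod_nonneg k hp0.ne'
  have hlt : k % (p : ℤ) < (p : ℤ) := Int.emod_lt_of_pos k hp0
  set n := (k % (p : ℤ)).toNat with hn
  have han : a ^ n = c := by
    rw [← hk', ← zpow_natCast, hn, Int.toNat_of_nonneg hnn]
  have hnp2 : n < p := by
    have : ((n : ℤ)) < (p : ℤ) := by rw [hn, Int.toNat_of_nonneg hnn]; exact hlt
    exact_mod_cast this
  have hn0 : 0 < n := by
    rcases Nat.eq_zero_or_pos n with h | h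
    · exfalso; rw [h, pow_zero] at han; exact hc1 han.symm
    · exact h
  refine ⟨n, hn0, ?_, han⟩
  exact (hp.coprime_iff_not_dvd.mpr fun hd =>
    absurd (Nat.le_of_dvd hn0 hd) (not_le.mpr hnp2)).symm

end StmtAux

namespace StmtAux

open Finset

variable {G : Type} [Group G] [Fintype G] [DecidableEq G]

theorem pow_mod_card (p : ℕ) (hcard : Fintype.card G = p) (x : G) {a b : ℕ}
    (hab : a ≡ b [MOD p]) : x ^ a = x ^ b :=
  pow_eq_pow_iff_modEq.mpr (hab.of_dvd (hcard ▸ orderOf_dvd_card))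

/-- the exponential map `ZMod p → G` for a generator. -/
def iota (p : ℕ) (g₀ : G) : ZMod p → G := fun i => g₀ ^ i.val

theorem iota_zero (p : ℕ) (hp : p.Prime) (g₀ : G) : iota p g₀ 0 = 1 := by
  haveI : NeZero p := ⟨hp.pos.ne'⟩
  show g₀ ^ (0 : ZMod p).val = 1
  rw [ZMod.val_zero, pow_zero]

theorem iota_add (p : ℕ) (hp : p.Prime) (hcard : Fintype.card G = p) (g₀ : G) (i j : ZMod p) :
    iota p g₀ (i + j) = iota p g₀ i * iota p g₀ j := by
  haveI : NeZero p := ⟨hp.pos.ne'⟩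
  show g₀ ^ (i + j).val = g₀ ^ i.val * g₀ ^ j.val
  rw [← pow_add]
  exact pow_mod_card p hcard g₀ (by rw [ZMod.val_add]; exact (Nat.mod_modEq _ p))

theorem iota_inj (p : ℕ) (hp : p.Prime) (g₀ : G) (hog : orderOf g₀ = p) :
    Function.Injective (iota p g₀) := by
  haveI : NeZero p := ⟨hp.pos.ne'⟩
  intro i j hij
  have h := pow_eq_pow_iff_modEq.mp hij
  rw [hog] at h
  have : i.val = j.val := by
    rw [Nat.ModEq] at h
    rwa [Nat.mod_eq_of_lt (ZMod.val_lt i), Nat.mod_eq_of_lt (ZMod.val_lt j)] at h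
  exact ZMod.val_injective p this

theorem iota_bij (p : ℕ) (hp : p.Prime) (hcard : Fintype.card G = p) (g₀ : G)
    (hog : orderOf g₀ = p) : Function.Bijective (iota p g₀) := by
  haveI : NeZero p := ⟨hp.pos.ne'⟩
  rw [Fintype.bijective_iff_injective_and_card]
  exact ⟨iota_inj p hp g₀ hog, by rw [ZMod.card, hcard]⟩

theorem iota_nsmul (p : ℕ) (hp : p.Prime) (hcard : Fintype.card G = p) (g₀ : G)
    (t : ℕ) (w : ZMod p) :
    iota p g₀ ((t : ZMod p) * w) = (iota p g₀ w) ^ t := by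
  induction t with
  | zero => rw [Nat.cast_zero, zero_mul, pow_zero, iota_zero p hp]
  | succ t ih =>
      have hcast : ((t + 1 : ℕ) : ZMod p) * w = (t : ZMod p) * w + w := by
        push_cast; ring
      rw [hcast, iota_add p hp hcard, ih, pow_succ]

theorem pw_pw (p : ℕ) (hcard : Fintype.card G = p) (m n : (ZMod p)ˣ) (X : Finset G) :
    (X.image fun x => x ^ ((n : ZMod p)).val).image (fun x => x ^ ((m : ZMod p)).val)
      = X.image (fun x => x ^ (((n * m : (ZMod p)ˣ) : ZMod p)).val) := by
  rw [Finset.image_image]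
  apply Finset.image_congr
  intro x _
  simp only [Function.comp_apply]
  rw [← pow_mul]
  apply pow_mod_card p hcard
  have h1 : ((n * m : (ZMod p)ˣ) : ZMod p) = (n : ZMod p) * (m : ZMod p) := rfl
  rw [h1, ZMod.val_mul]
  exact (Nat.mod_modEq _ p).symm

theorem pw_one (p : ℕ) (hp : p.Prime) (X : Finset G) :
    X.image (fun x => x ^ (((1 : (ZMod p)ˣ) : ZMod p)).val) = X := by
  haveI : Fact (1 < p) := ⟨hp.one_lt⟩
  have h1 : ((1 : (ZMod p)ˣ) : ZMod p) = 1 := rfl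
  rw [h1, ZMod.val_one]
  simp only [pow_one]
  exact Finset.image_id'

/-- the stabilizer of a finset under the power action of units -/
def stab (p : ℕ) (hp : p.Prime) (hcard : Fintype.card G = p) (X : Finset G) :
    Subgroup (ZMod p)ˣ where
  carrier := {n | X.image (fun x => x ^ ((n : ZMod p)).val) = X}
  one_mem' := pw_one p hp X
  mul_mem' := by
    intro a b ha hb
    have ha' : X.image (fun x => x ^ ((a : ZMod p)).val) = X := ha
    have hb' : X.image (fun x => x ^ ((b : ZMod p)).val) = X := hb
    show X.image (fun x => x ^ (((a * b : (ZMod p)ˣ) : ZMod p)).val) = X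
    rw [mul_comm, ← pw_pw p hcard a b X, hb', ha']
  inv_mem' := by
    intro a ha
    have ha' : X.image (fun x => x ^ ((a : ZMod p)).val) = X := ha
    show X.image (fun x => x ^ (((a⁻¹ : (ZMod p)ˣ) : ZMod p)).val) = X
    conv_lhs => rw [← ha']
    rw [pw_pw p hcard a⁻¹ a X, mul_inv_cancel, pw_one p hp]

theorem stab_pow_eq_one (p : ℕ) (hp : p.Prime) (hcard : Fintype.card G = p)
    (X : Finset G) {n : (ZMod p)ˣ} (hn : n ∈ stab p hp hcard X) :
    n ^ (Nat.card (stab p hp hcard X)) = 1 := by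
  have h := pow_card_eq_one' (G := stab p hp hcard X) (x := ⟨n, hn⟩)
  have h3 := Subtype.ext_iff.mp h
  rw [SubmonoidClass.coe_pow] at h3
  exact h3

theorem stab_exists (p : ℕ) (hp : p.Prime) (hcard : Fintype.card G = p)
    (A : SRing G) (hc : ∀ x y : G, x * y = y * x)
    {X : Finset G} (hX : X ∈ A.basicSets) (hX1 : X ≠ {1})
    {a c : G} (haX : a ∈ X) (hcX : c ∈ X) :
    ∃ u : (ZMod p)ˣ, u ∈ stab p hp hcard X ∧ a ^ ((u : ZMod p)).val = c := by
  haveI : NeZero p := ⟨hp.pos.ne'⟩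
  have ha1 : a ≠ 1 := fun h => hX1 (block_one A hX (h ▸ haX))
  have hc1 : c ≠ 1 := fun h => hX1 (block_one A hX (h ▸ hcX))
  obtain ⟨n, hn0, hnp, hanc⟩ := exists_pow_eq p hp hcard ha1 hc1
  refine ⟨ZMod.unitOfCoprime n hnp, ?_, ?_⟩
  · show X.image (fun x => x ^ (((ZMod.unitOfCoprime n hnp : (ZMod p)ˣ) : ZMod p)).val) = X
    have hval : ∀ x : G, x ^ (((ZMod.unitOfCoprime n hnp : (ZMod p)ˣ) : ZMod p)).val = x ^ n := by
      intro x
      apply pow_mod_card p hcard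
      rw [ZMod.coe_unitOfCoprime, ZMod.val_natCast]
      exact (Nat.mod_modEq _ p)
    have himg : X.image (fun x => x ^ (((ZMod.unitOfCoprime n hnp : (ZMod p)ˣ) : ZMod p)).val)
        = X.image (fun x => x ^ n) :=
      Finset.image_congr fun x _ => hval x
    rw [himg]
    have hAset : A.IsASet (X.image (· ^ n)) :=
      isASet_image_pow p hp hcard A hc n hn0 hnp X (isASet_block A hX)
    have hcT : c ∈ X.image (· ^ n) := hanc ▸ Finset.mem_image_of_mem _ haX
    have hsub : X ⊆ X.image (· ^ n) :=
      hAset X hX ⟨c, Finset.mem_inter.mpr ⟨hcX, hcT⟩⟩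
    have hcardeq : (X.image (· ^ n)).card = X.card :=
      Finset.card_image_of_injective X (pow_inj (by rwa [hcard]))
    exact (Finset.eq_of_subset_of_card_le hsub (le_of_eq hcardeq)).symm
  · have hval : a ^ (((ZMod.unitOfCoprime n hnp : (ZMod p)ˣ) : ZMod p)).val = a ^ n := by
      apply pow_mod_card p hcard
      rw [ZMod.coe_unitOfCoprime, ZMod.val_natCast]
      exact (Nat.mod_modEq _ p)
    rw [hval, hanc]

theorem card_stab (p : ℕ) (hp : p.Prime) (hcard : Fintype.card G = p)
    (A : SRing G) (hc : ∀ x y : G, x * y = y * x)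
    {X : Finset G} (hX : X ∈ A.basicSets) (hX1 : X ≠ {1})
    {a : G} (haX : a ∈ X) :
    Nat.card (stab p hp hcard X) = X.card := by
  haveI : NeZero p := ⟨hp.pos.ne'⟩
  have ha1 : a ≠ 1 := fun h => hX1 (block_one A hX (h ▸ haX))
  have hoa : orderOf a = p := by
    have hdvd : orderOf a ∣ p := hcard ▸ orderOf_dvd_card
    rcases (Nat.Prime.eq_one_or_self_of_dvd hp _ hdvd) with h | h
    · exact absurd (orderOf_eq_one_iff.mp h) ha1
    · exact h
  have hmem : ∀ n : stab p hp hcard X, a ^ (((n : (ZMod p)ˣ) : ZMod p)).val ∈ X := by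
    intro n
    have h := n.2
    have : a ^ (((n : (ZMod p)ˣ) : ZMod p)).val
        ∈ X.image (fun x => x ^ (((n : (ZMod p)ˣ) : ZMod p)).val) :=
      Finset.mem_image_of_mem _ haX
    rwa [h] at this
  have hbij : Function.Bijective
      (fun n : stab p hp hcard X => (⟨a ^ (((n : (ZMod p)ˣ) : ZMod p)).val, hmem n⟩ : {x // x ∈ X})) := by
    constructor
    · intro n m hnm
      rw [Subtype.ext_iff] at hnm
      have h := pow_eq_pow_iff_modEq.mp hnm
      rw [hoa] at h
      have hval : (((n : (ZMod p)ˣ) : ZMod p)).val = (((m : (ZMod p)ˣ) : ZMod p)).val := by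
        rw [Nat.ModEq] at h
        rwa [Nat.mod_eq_of_lt (ZMod.val_lt _), Nat.mod_eq_of_lt (ZMod.val_lt _)] at h
      exact Subtype.ext (Units.ext (ZMod.val_injective p hval))
    · rintro ⟨c, hcX⟩
      obtain ⟨u, hu, hau⟩ := stab_exists p hp hcard A hc hX hX1 haX hcX
      exact ⟨⟨u, hu⟩, Subtype.ext hau⟩
  calc Nat.card (stab p hp hcard X) = Nat.card {x // x ∈ X} := Nat.card_eq_of_bijective _ hbij
  _ = X.card := by rw [Nat.card_eq_fintype_card, Fintype.card_coe]

end StmtAux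

namespace StmtAux

open Finset Polynomial

theorem psum_card_sub_one (p : ℕ) [NeZero p] (hp : p.Prime) :
    ∑ x : ZMod p, x ^ (p - 1) = -1 := by
  haveI : Fact p.Prime := ⟨hp⟩
  haveI : NeZero p := ⟨hp.pos.ne'⟩
  have h2 : 2 ≤ p := hp.two_le
  have h0 : (0 : ZMod p) ^ (p - 1) = 0 := zero_pow (by omega)
  rw [← Finset.add_sum_erase _ _ (Finset.mem_univ (0 : ZMod p)), h0, zero_add]
  rw [Finset.sum_congr rfl (fun x hx => ZMod.pow_card_sub_one_eq_one (Finset.mem_erase.mp hx).1)]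
  rw [Finset.sum_const, Finset.card_erase_of_mem (Finset.mem_univ _), Finset.card_univ, ZMod.card]
  rw [nsmul_eq_mul, mul_one, Nat.cast_sub hp.one_le, Nat.cast_one, ZMod.natCast_self, zero_sub]

theorem psum_zero (p : ℕ) [NeZero p] (hp : p.Prime) {m : ℕ} (hm0 : 0 < m) (hm2 : m < 2 * (p - 1))
    (hmne : m ≠ p - 1) : ∑ x : ZMod p, x ^ m = 0 := by
  haveI : Fact p.Prime := ⟨hp⟩
  haveI : NeZero p := ⟨hp.pos.ne'⟩
  have h2 : 2 ≤ p := hp.two_le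
  rcases lt_or_gt_of_ne hmne with h | h
  · exact FiniteField.sum_pow_lt_card_sub_one (ZMod p) m (by rw [ZMod.card]; exact h)
  · have hsplit : ∀ x : ZMod p, x ^ m = x ^ (m - (p - 1)) := by
      intro x
      by_cases hx : x = 0
      · subst hx; rw [zero_pow hm0.ne', zero_pow (by omega)]
      · have hxm : x ^ m = x ^ (p - 1) * x ^ (m - (p - 1)) := by
          rw [← pow_add]; congr 1; omega
        rw [hxm, ZMod.pow_card_sub_one_eq_one hx, one_mul]
    rw [Finset.sum_congr rfl fun x _ => hsplit x]
    have hlt : m - (p - 1) < Fintype.card (ZMod p) - 1 := by rw [ZMod.card]; omega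
    exact FiniteField.sum_pow_lt_card_sub_one (ZMod p) _ hlt

theorem poly_rigid (p : ℕ) (hp : p.Prime) (h : ℕ) (hh1 : 1 ≤ h) (hh2 : 2 * h ≤ p - 1)
    (F : ZMod p → ZMod p)
    (hF : ∀ y z : ZMod p, (F y - F z) ^ h = (y - z) ^ h)
    {u v : ZMod p} (huv : u ≠ v) (hu : F u = u) (hv : F v = v) :
    ∀ y, F y = y := by
  haveI : Fact p.Prime := ⟨hp⟩
  haveI : NeZero p := ⟨hp.pos.ne'⟩
  have hp2 : 2 ≤ p := hp.two_le
  have hp3 : 3 ≤ p := by omega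
  set S : Submodule (ZMod p) (ZMod p → ZMod p) :=
    Submodule.span (ZMod p) (Set.range fun j : Fin (h + 1) => fun y => (F y) ^ (j : ℕ)) with hS
  have hgx : ∀ x : ZMod p, (fun y => (x - y) ^ h) ∈ S := by
    intro x
    have hexp : (fun y => (x - y) ^ h)
        = ∑ k ∈ Finset.range (h + 1),
            ((F x) ^ k * (-1 : ZMod p) ^ (h - k) * (h.choose k : ZMod p)) •
              (fun y => (F y) ^ (h - k)) := by
      funext y
      rw [Finset.sum_apply]
      have h1 : (x - y) ^ h = (F x - F y) ^ h := (hF x y).symm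
      rw [h1, sub_eq_add_neg, add_pow]
      refine Finset.sum_congr rfl fun k hk => ?_
      rw [Pi.smul_apply, smul_eq_mul, neg_pow]
      ring
    rw [hexp]
    refine Submodule.sum_mem S fun k hk => Submodule.smul_mem S _ ?_
    exact Submodule.subset_span ⟨⟨h - k, by omega⟩, rfl⟩
  have hmono : ∀ d : ℕ, d ≤ h → (fun y : ZMod p => y ^ d) ∈ S := by
    intro d hd
    set k := p - 1 - h + d with hk
    have hsum : (∑ x : ZMod p, x ^ k • (fun y => (x - y) ^ h)) ∈ S :=
      Submodule.sum_mem S fun x _ => Submodule.smul_mem S _ (hgx x)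
    have hcalc : (∑ x : ZMod p, x ^ k • (fun y : ZMod p => (x - y) ^ h))
        = (-(h.choose (h - d) : ZMod p) * (-1) ^ d) • (fun y : ZMod p => y ^ d) := by
      funext y
      rw [Finset.sum_apply, Pi.smul_apply, smul_eq_mul]
      have hexp : ∀ x : ZMod p, x ^ k * (x - y) ^ h
          = ∑ j ∈ Finset.range (h + 1),
              ((h.choose j : ZMod p) * (-y) ^ (h - j)) * x ^ (k + j) := by
        intro x
        rw [sub_eq_add_neg, add_pow, Finset.mul_sum]
        refine Finset.sum_congr rfl fun j hj => ?_
        rw [pow_add]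
        ring
      have hterm : ∀ x : ZMod p, (x ^ k • fun y : ZMod p => (x - y) ^ h) y
          = x ^ k * (x - y) ^ h := fun x => by rw [Pi.smul_apply, smul_eq_mul]
      rw [Finset.sum_congr rfl fun x _ => hterm x]
      rw [Finset.sum_congr rfl fun x _ => hexp x]
      rw [Finset.sum_comm]
      have hinner : ∀ j ∈ Finset.range (h + 1),
          (∑ x : ZMod p, ((h.choose j : ZMod p) * (-y) ^ (h - j)) * x ^ (k + j))
            = ((h.choose j : ZMod p) * (-y) ^ (h - j)) * (∑ x : ZMod p, x ^ (k + j)) := by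
        intro j _
        rw [Finset.mul_sum]
      rw [Finset.sum_congr rfl hinner]
      rw [Finset.sum_eq_single (h - d)]
      · have hkj : k + (h - d) = p - 1 := by omega
        rw [hkj, psum_card_sub_one p hp]
        have hhd : h - (h - d) = d := by omega
        rw [hhd, neg_pow]
        ring
      · intro j hj hjne
        rw [Finset.mem_range] at hj
        have hps : ∑ x : ZMod p, x ^ (k + j) = 0 := by
          apply psum_zero p hp
          · omega
          · omega
          · omega
        rw [hps, mul_zero]
      · intro habs
        exfalso
        exact habs (Finset.mem_range.mpr (by omega))
    have hcoef : (-(h.choose (h - d) : ZMod p) * (-1) ^ d) ≠ 0 := by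
      intro hzero
      rcases mul_eq_zero.mp hzero with hc | hc
      · rw [neg_eq_zero, ZMod.natCast_eq_zero_iff] at hc
        have hdvd : h.choose (h - d) ∣ Nat.factorial h :=
          ⟨Nat.factorial (h - d) * Nat.factorial (h - (h - d)), by
            rw [← mul_assoc, Nat.choose_mul_factorial_mul_factorial (by omega)]⟩
        have hpf : p ∣ Nat.factorial h := dvd_trans hc hdvd
        have := (Nat.Prime.dvd_factorial hp).mp hpf
        omega
      · rcases neg_one_pow_eq_or (ZMod p) d with hh | hh <;> rw [hh] at hc
        · exact one_ne_zero hc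
        · exact one_ne_zero (neg_eq_zero.mp hc)
    have hmem := Submodule.smul_mem S (-(h.choose (h - d) : ZMod p) * (-1) ^ d)⁻¹
      (hcalc ▸ hsum)
    rwa [smul_smul, inv_mul_cancel₀ hcoef, one_smul] at hmem
  set mono : Fin (h + 1) → (ZMod p → ZMod p) := fun j => fun y => y ^ (j : ℕ) with hmonodef
  have hWS : Submodule.span (ZMod p) (Set.range mono) ≤ S := by
    rw [Submodule.span_le]
    rintro _ ⟨j, rfl⟩
    exact hmono j (by omega)
  have hli : LinearIndependent (ZMod p) mono := by
    rw [Fintype.linearIndependent_iff]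
    intro c hc j
    set P : Polynomial (ZMod p) := ∑ i : Fin (h + 1), Polynomial.C (c i) * Polynomial.X ^ (i : ℕ)
      with hP
    have hPdeg : P.natDegree ≤ h := by
      apply Polynomial.natDegree_sum_le_of_forall_le
      intro i _
      exact (Polynomial.natDegree_C_mul_X_pow_le _ _).trans (by omega)
    have hPeval : ∀ y : ZMod p, P.eval y = 0 := by
      intro y
      have hcy := congrFun hc y
      rw [Finset.sum_apply] at hcy
      rw [hP, Polynomial.eval_finset_sum]
      simpa [hmonodef] using hcy
    have hP0 : P = 0 := by
      apply Polynomial.eq_zero_of_natDegree_lt_card_of_eval_eq_zero' P Finset.univ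
        (fun y _ => hPeval y)
      rw [Finset.card_univ, ZMod.card]
      omega
    have hcoeff := congrArg (fun qq => Polynomial.coeff qq (j : ℕ)) hP0
    simp only [hP, Polynomial.finset_sum_coeff, Polynomial.coeff_C_mul, Polynomial.coeff_X_pow,
      Polynomial.coeff_zero] at hcoeff
    rw [Finset.sum_eq_single j] at hcoeff
    · simpa using hcoeff
    · intro i _ hij
      rw [if_neg (fun hh => hij (Fin.ext hh.symm)), mul_zero]
    · intro habs
      exact absurd (Finset.mem_univ j) habs
  have hrankW : Module.finrank (ZMod p) (Submodule.span (ZMod p) (Set.range mono)) = h + 1 := by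
    rw [finrank_span_eq_card hli, Fintype.card_fin]
  have hrankS : Module.finrank (ZMod p) S ≤ h + 1 := by
    have hr := finrank_range_le_card (R := ZMod p)
      (fun j : Fin (h + 1) => fun y : ZMod p => (F y) ^ (j : ℕ))
    rw [Fintype.card_fin] at hr
    exact hr
  have hSW : Submodule.span (ZMod p) (Set.range mono) = S :=
    Submodule.eq_of_le_of_finrank_le hWS (by omega)
  set E : Polynomial (ZMod p) →ₗ[ZMod p] (ZMod p → ZMod p) :=
    { toFun := fun qq => fun y => qq.eval y
      map_add' := fun qq rr => by funext y; simp [Polynomial.eval_add]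
      map_smul' := fun c qq => by funext y; simp } with hE
  have hWE : Submodule.span (ZMod p) (Set.range mono) ≤
      Submodule.map E (Polynomial.degreeLE (ZMod p) h) := by
    rw [Submodule.span_le]
    rintro _ ⟨j, rfl⟩
    refine Submodule.mem_map.mpr ⟨Polynomial.X ^ (j : ℕ), ?_, ?_⟩
    · rw [Polynomial.mem_degreeLE, Polynomial.degree_X_pow]
      exact_mod_cast Nat.cast_le.mpr (by omega : (j : ℕ) ≤ h)
    · funext y
      simp [hE, hmonodef]
  have hinterp : ∀ w ∈ S, ∃ qq : Polynomial (ZMod p), qq.natDegree ≤ h ∧ ∀ y, qq.eval y = w y := by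
    intro w hw
    rw [← hSW] at hw
    obtain ⟨qq, hq1, hq2⟩ := hWE hw
    exact ⟨qq, Polynomial.natDegree_le_iff_degree_le.mpr (Polynomial.mem_degreeLE.mp hq1),
      fun y => congrFun hq2 y⟩
  have hFS : F ∈ S := by
    have hFeq : F = fun y => (F y) ^ ((⟨1, by omega⟩ : Fin (h + 1)) : ℕ) := by
      funext y
      rw [pow_one]
    rw [hFeq]
    exact Submodule.subset_span ⟨⟨1, by omega⟩, rfl⟩
  obtain ⟨f₀, hf₀deg, hf₀⟩ := hinterp _ hFS
  set d := f₀.natDegree with hd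
  by_cases hd1 : d ≤ 1
  · have hsub : ∀ y ∈ ({u, v} : Finset (ZMod p)), (f₀ - Polynomial.X).eval y = 0 := by
      intro y hy
      rcases Finset.mem_insert.mp hy with rfl | hy
      · rw [Polynomial.eval_sub, Polynomial.eval_X, hf₀, hu, sub_self]
      · rw [Finset.mem_singleton] at hy; subst hy
        rw [Polynomial.eval_sub, Polynomial.eval_X, hf₀, hv, sub_self]
    have hdegsub : (f₀ - Polynomial.X).natDegree ≤ 1 := by
      refine le_trans (Polynomial.natDegree_sub_le _ _) ?_
      rw [Polynomial.natDegree_X]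
      omega
    have hzero : f₀ - Polynomial.X = 0 := by
      apply Polynomial.eq_zero_of_natDegree_lt_card_of_eval_eq_zero' _ _ hsub
      rw [Finset.card_insert_of_notMem (by simpa using huv), Finset.card_singleton]
      omega
    intro y
    have hy := congrArg (Polynomial.eval y) hzero
    rw [Polynomial.eval_sub, Polynomial.eval_X, Polynomial.eval_zero, sub_eq_zero] at hy
    rw [← hf₀ y]
    exact hy
  · exfalso
    push_neg at hd1
    have hdh : d ≤ h := hf₀deg
    set j := h / d + 1 with hj
    have hjd1 : h < j * d := by
      have hdm := Nat.div_add_mod h d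
      have hmod : h % d < d := Nat.mod_lt _ (by omega)
      calc h = d * (h / d) + h % d := (Nat.div_add_mod h d).symm
      _ < d * (h / d) + d := by omega
      _ = (h / d + 1) * d := by ring
    have hjd2 : j * d ≤ p - 1 := by
      have h1 : (h / d) * d ≤ h := Nat.div_mul_le_self h d
      have h2 : j * d = (h / d) * d + d := by ring
      omega
    have hjh : j ≤ h := by
      have h1 : h / d ≤ h / 2 := Nat.div_le_div_left (by omega) (by omega)
      omega
    have hFjS : (fun y => (F y) ^ ((⟨j, by omega⟩ : Fin (h + 1)) : ℕ)) ∈ S :=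
      Submodule.subset_span ⟨⟨j, by omega⟩, rfl⟩
    obtain ⟨g₁, hg₁deg, hg₁⟩ := hinterp _ hFjS
    have hdiff : f₀ ^ j - g₁ = 0 := by
      apply Polynomial.eq_zero_of_natDegree_lt_card_of_eval_eq_zero' _ Finset.univ
      · intro y _
        rw [Polynomial.eval_sub, Polynomial.eval_pow, hf₀, hg₁ y, sub_self]
      · rw [Finset.card_univ, ZMod.card]
        have hdegpow : (f₀ ^ j).natDegree = j * d := by
          rw [Polynomial.natDegree_pow]
        have hds : (f₀ ^ j - g₁).natDegree ≤ j * d := by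
          refine le_trans (Polynomial.natDegree_sub_le _ _) ?_
          rw [hdegpow]
          exact max_le le_rfl (by omega)
        omega
    have heq : f₀ ^ j = g₁ := sub_eq_zero.mp hdiff
    have hdeg2 : (f₀ ^ j).natDegree = j * d := by rw [Polynomial.natDegree_pow]
    rw [heq] at hdeg2
    omega

end StmtAux

namespace StmtAux

open Finset

variable {G : Type} [Group G] [Fintype G] [DecidableEq G]

theorem mem_autPerm_iff (A : SRing G) (f : Equiv.Perm G) :
    f ∈ A.autPerm ↔ ∀ X ∈ A.basicSets, ∀ g h : G, h * g⁻¹ ∈ X ↔ f h * (f g)⁻¹ ∈ X :=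
  Iff.rfl

theorem two_point_rigid (p : ℕ) (hp : p.Prime) (hcard : Fintype.card G = p)
    (A : SRing G) (hrk : 2 < A.basicSets.card) (f : Equiv.Perm G)
    (hf : ∀ X ∈ A.basicSets, ∀ g h : G, h * g⁻¹ ∈ X ↔ f h * (f g)⁻¹ ∈ X)
    {u v : G} (huv : u ≠ v) (hu : f u = u) (hv : f v = v) :
    ∀ x, f x = x := by
  haveI : Fact p.Prime := ⟨hp⟩
  haveI : NeZero p := ⟨hp.pos.ne'⟩
  haveI : IsCyclic G := isCyclic_of_prime_card (by rw [Nat.card_eq_fintype_card, hcard])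
  letI : CommGroup G := IsCyclic.commGroup
  have hc : ∀ x y : G, x * y = y * x := fun x y => mul_comm x y
  obtain ⟨g₀, hg₀⟩ := IsCyclic.exists_generator (α := G)
  have hog : orderOf g₀ = p := by
    rw [orderOf_eq_card_of_forall_mem_zpowers hg₀, Nat.card_eq_fintype_card, hcard]
  set ι : ZMod p → G := iota p g₀ with hι
  have hbij : Function.Bijective ι := iota_bij p hp hcard g₀ hog
  set e : ZMod p ≃ G := Equiv.ofBijective ι hbij with he
  have hικ : ∀ x : G, ι (e.symm x) = x := fun x => e.apply_symm_apply x
  have hκι : ∀ w : ZMod p, e.symm (ι w) = w := fun w => e.symm_apply_apply w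
  have hιinj : Function.Injective ι := hbij.1
  -- nontrivial block sizes are equal
  have hsizele : ∀ X ∈ A.basicSets, ∀ Y ∈ A.basicSets, X ≠ {1} → Y ≠ {1} →
      X.card ≤ Y.card := by
    intro X hX Y hY hX1 hY1
    have haY : rep Y ∈ Y := rep_mem (A.nonempty_mem Y hY)
    have hcX : rep X ∈ X := rep_mem (A.nonempty_mem X hX)
    have ha1 : rep Y ≠ 1 := fun hh => hY1 (block_one A hY (hh ▸ haY))
    have hc1 : rep X ≠ 1 := fun hh => hX1 (block_one A hX (hh ▸ hcX))
    obtain ⟨n, hn0, hnp, hanc⟩ := exists_pow_eq p hp hcard ha1 hc1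
    have hAset : A.IsASet (Y.image (· ^ n)) :=
      isASet_image_pow p hp hcard A hc n hn0 hnp Y (isASet_block A hY)
    have hcT : rep X ∈ Y.image (· ^ n) := hanc ▸ Finset.mem_image_of_mem _ haY
    have hsub : X ⊆ Y.image (· ^ n) := hAset X hX ⟨rep X, Finset.mem_inter.mpr ⟨hcX, hcT⟩⟩
    calc X.card ≤ (Y.image (· ^ n)).card := Finset.card_le_card hsub
    _ = Y.card := Finset.card_image_of_injective Y (pow_inj (by rwa [hcard]))
  have herase : 1 < (A.basicSets.erase {1}).card := by
    have := Finset.card_erase_of_mem A.one_mem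
    omega
  obtain ⟨X₁, hX₁e, X₂, hX₂e, hX12⟩ := Finset.one_lt_card.mp herase
  have hX₁ : X₁ ∈ A.basicSets := Finset.mem_of_mem_erase hX₁e
  have hX₂ : X₂ ∈ A.basicSets := Finset.mem_of_mem_erase hX₂e
  have hX₁1 : X₁ ≠ {1} := Finset.ne_of_mem_erase hX₁e
  have hX₂1 : X₂ ≠ {1} := Finset.ne_of_mem_erase hX₂e
  set hsz := X₁.card with hhsz
  have hszpos : 1 ≤ hsz := Finset.card_pos.mpr (A.nonempty_mem X₁ hX₁)
  have hsize : ∀ X ∈ A.basicSets, X ≠ {1} → X.card = hsz := fun X hX hX1 =>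
    le_antisymm (hsizele X hX X₁ hX₁ hX1 hX₁1) (hsizele X₁ hX₁ X hX hX₁1 hX1)
  have h2size : 2 * hsz ≤ p - 1 := by
    have hdisj : Disjoint X₁ X₂ := A.disj X₁ hX₁ X₂ hX₂ hX12
    have hsub : X₁ ∪ X₂ ⊆ Finset.univ.erase 1 := by
      intro x hx
      rcases Finset.mem_union.mp hx with hx | hx
      · exact Finset.mem_erase.mpr
          ⟨fun hh => hX₁1 (block_one A hX₁ (hh ▸ hx)), Finset.mem_univ x⟩
      · exact Finset.mem_erase.mpr
          ⟨fun hh => hX₂1 (block_one A hX₂ (hh ▸ hx)), Finset.mem_univ x⟩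
    have hcards := Finset.card_le_card hsub
    rw [Finset.card_union_of_disjoint hdisj, Finset.card_erase_of_mem (Finset.mem_univ _),
      Finset.card_univ, hcard, hsize X₂ hX₂ hX₂1] at hcards
    omega
  -- key field-power lemma
  have keyL : ∀ X ∈ A.basicSets, ∀ y z : ZMod p, ι y ∈ X → ι z ∈ X →
      y ^ hsz = z ^ hsz := by
    intro X hX y z hy hz
    by_cases hX1 : X = {1}
    · subst hX1
      have hy0 : y = 0 := hιinj (by
        rw [show (ι 0 : G) = 1 from iota_zero p hp g₀]
        exact Finset.mem_singleton.mp hy)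
      have hz0 : z = 0 := hιinj (by
        rw [show (ι 0 : G) = 1 from iota_zero p hp g₀]
        exact Finset.mem_singleton.mp hz)
      rw [hy0, hz0]
    · have hXsz : X.card = hsz := hsize X hX hX1
      have ha₀X : rep X ∈ X := rep_mem (A.nonempty_mem X hX)
      have hcardstab : Nat.card (stab p hp hcard X) = hsz := by
        rw [card_stab p hp hcard A hc hX hX1 ha₀X, hXsz]
      set w₀ := e.symm (rep X) with hw₀
      have hιw₀ : ι w₀ = rep X := hικ (rep X)
      have hrepr : ∀ t : ZMod p, ι t ∈ X →
          ∃ uu : (ZMod p)ˣ, uu ∈ stab p hp hcard X ∧ t = (uu : ZMod p) * w₀ := by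
        intro t ht
        obtain ⟨uu, huu, hau⟩ := stab_exists p hp hcard A hc hX hX1 ha₀X ht
        refine ⟨uu, huu, ?_⟩
        apply hιinj
        have h1 : ι ((((uu : ZMod p)).val : ZMod p) * w₀) = (ι w₀) ^ (((uu : ZMod p)).val) :=
          iota_nsmul p hp hcard g₀ _ _
        have h2 : (((uu : ZMod p)).val : ZMod p) = (uu : ZMod p) := by
          rw [ZMod.natCast_val, ZMod.cast_id]
        rw [← h2, h1, hιw₀, hau]
      obtain ⟨uy, huy, hty⟩ := hrepr y hy
      obtain ⟨uz, huz, htz⟩ := hrepr z hz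
      have hupy : (uy : ZMod p) ^ hsz = 1 := by
        have h3 := stab_pow_eq_one p hp hcard X huy
        rw [hcardstab] at h3
        rw [← Units.val_pow_eq_pow_val, h3, Units.val_one]
      have hupz : (uz : ZMod p) ^ hsz = 1 := by
        have h3 := stab_pow_eq_one p hp hcard X huz
        rw [hcardstab] at h3
        rw [← Units.val_pow_eq_pow_val, h3, Units.val_one]
      rw [hty, htz, mul_pow, mul_pow, hupy, hupz, one_mul]
  -- the conjugated function on ZMod p
  set F : ZMod p → ZMod p := fun y => e.symm (f (ι y)) with hF
  have hισ : ∀ s t : ZMod p, ι (s - t) = ι s * (ι t)⁻¹ := by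
    intro s t
    show iota p g₀ (s - t) = iota p g₀ s * (iota p g₀ t)⁻¹
    have h1 := iota_add p hp hcard g₀ (s - t) t
    rw [sub_add_cancel] at h1
    rw [h1, mul_inv_cancel_right]
  have hFid : ∀ y z : ZMod p, (F y - F z) ^ hsz = (y - z) ^ hsz := by
    intro y z
    obtain ⟨X, hX, hmem⟩ := A.exists_mem (ι (y - z))
    have h1 : ι y * (ι z)⁻¹ ∈ X := by rw [← hισ]; exact hmem
    have h2 : f (ι y) * (f (ι z))⁻¹ ∈ X := (hf X hX (ι z) (ι y)).mp h1
    have h3 : ι (F y - F z) ∈ X := by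
      rw [hισ]
      have hFy : ι (F y) = f (ι y) := hικ _
      have hFz : ι (F z) = f (ι z) := hικ _
      rw [hFy, hFz]
      exact h2
    exact keyL X hX _ _ h3 hmem
  have huv' : e.symm u ≠ e.symm v := fun hh => huv (by
    have := congrArg ι hh
    rwa [hικ, hικ] at this)
  have hu' : F (e.symm u) = e.symm u := by
    show e.symm (f (ι (e.symm u))) = e.symm u
    rw [hικ, hu]
  have hv' : F (e.symm v) = e.symm v := by
    show e.symm (f (ι (e.symm v))) = e.symm v
    rw [hικ, hv]
  have hall := poly_rigid p hp hsz hszpos h2size F hFid huv' hu' hv'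
  intro x
  have hx := hall (e.symm x)
  have hx2 : e.symm (f x) = e.symm x := by
    have : e.symm (f (ι (e.symm x))) = e.symm x := hx
    rwa [hικ] at this
  have := congrArg ι hx2
  rwa [hικ, hικ] at this

end StmtAux


/-- For an S-ring `𝒜` over a group of prime order `p` with `p ≤ 3` or `rk(𝒜) > 2`,
the group `Aut(𝒜)` is 2-isolated: any subgroup of `Sym(G)` having the same orbits on
`G × G` as `Aut(𝒜)` equals `Aut(𝒜)`. -/
theorem stmt12 (G : Type) [Group G] [Fintype G] [DecidableEq G]
    (p : ℕ) (hp : p.Prime) (hcard : Fintype.card G = p)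
    (A : SRing G) (h : p ≤ 3 ∨ 2 < A.basicSets.card)
    (K : Subgroup (Equiv.Perm G))
    (heq : ∀ q r : G × G,
      (∃ k ∈ K, (k q.1, k q.2) = r) ↔ (∃ f ∈ A.autPerm, (f q.1, f q.2) = r)) :
    K = A.autPerm := by
  have hKle : K ≤ A.autPerm := by
    intro k hk
    rw [StmtAux.mem_autPerm_iff]
    intro X hX g hg
    obtain ⟨f, hfM, hfp⟩ := (heq (g, hg) (k g, k hg)).mp ⟨k, hk, rfl⟩
    have h1 : f g = k g := congrArg Prod.fst hfp
    have h2 : f hg = k hg := congrArg Prod.snd hfp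
    have h3 := (StmtAux.mem_autPerm_iff A f).mp hfM X hX g hg
    rwa [h1, h2] at h3
  have hrigid : ∀ f : Equiv.Perm G, f ∈ A.autPerm →
      ∀ u v : G, u ≠ v → f u = u → f v = v → f = 1 := by
    intro f hf u v huv hu hv
    rcases h with hp3 | hrk
    · apply Equiv.ext
      intro x
      show f x = x
      by_cases hxu : x = u
      · rw [hxu, hu]
      by_cases hxv : x = v
      · rw [hxv, hv]
      have hfxu : f x ≠ u := fun hh => hxu (f.injective (hh.trans hu.symm))
      have hfxv : f x ≠ v := fun hh => hxv (f.injective (hh.trans hv.symm))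
      have hsmall : ((Finset.univ.erase u).erase v).card ≤ 1 := by
        rw [Finset.card_erase_of_mem
            (Finset.mem_erase.mpr ⟨huv.symm, Finset.mem_univ v⟩),
          Finset.card_erase_of_mem (Finset.mem_univ u), Finset.card_univ, hcard]
        omega
      have hxm : x ∈ (Finset.univ.erase u).erase v :=
        Finset.mem_erase.mpr ⟨hxv, Finset.mem_erase.mpr ⟨hxu, Finset.mem_univ x⟩⟩
      have hfxm : f x ∈ (Finset.univ.erase u).erase v :=
        Finset.mem_erase.mpr ⟨hfxv, Finset.mem_erase.mpr ⟨hfxu, Finset.mem_univ (f x)⟩⟩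
      exact Finset.card_le_one.mp hsmall _ hfxm _ hxm
    · have hfx := StmtAux.two_point_rigid p hp hcard A hrk f
        ((StmtAux.mem_autPerm_iff A f).mp hf) huv hu hv
      exact Equiv.ext fun x => hfx x
  apply le_antisymm hKle
  intro f hfM
  obtain ⟨u, v, huv⟩ := Fintype.exists_pair_of_one_lt_card (by rw [hcard]; exact hp.one_lt)
  obtain ⟨k, hkK, hkp⟩ := (heq (u, v) (f u, f v)).mpr ⟨f, hfM, rfl⟩
  have h1 : k u = f u := congrArg Prod.fst hkp
  have h2 : k v = f v := congrArg Prod.snd hkp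
  have hkM : k ∈ A.autPerm := hKle hkK
  have hm : (k⁻¹ * f) ∈ A.autPerm := mul_mem (inv_mem hkM) hfM
  have hmu : (k⁻¹ * f) u = u := by
    rw [Equiv.Perm.mul_apply, ← h1]
    exact k.symm_apply_apply u
  have hmv : (k⁻¹ * f) v = v := by
    rw [Equiv.Perm.mul_apply, ← h2]
    exact k.symm_apply_apply v
  have hone := hrigid _ hm u v huv hmu hmv
  have hfk : k = f := by
    have := congrArg (fun s => k * s) hone
    simpa [← mul_assoc] using this.symm
  rw [← hfk]
  exact hkK
end

section
/- Let p ≥ 5 be a prime and G an abelian group of order 9p. Then for distinct i, j ∈ {1,2,3} the S-rings 𝒜_i^* and 𝒜_j^* over G are not algebraically isomorphic. -/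
open scoped Pointwise

/-- For `T` cyclic of order `3p`, the unique nontrivial subdirect product
`W₀ = {(α,β) ∈ Aut(T₃) × Aut(T_p) : α = id ↔ β ∈ M₀}` viewed inside `Aut(T)`, where
`T₃ = {x : x³ = 1}`, `T_p = {x : x^p = 1}` are the subgroups of orders `3`, `p` and `M₀`,
the index-2 subgroup of `Aut(T_p)`, consists of the squares `x ↦ x^(m²)`. -/
def W0 (p : ℕ) (T : Type*) [Group T] : Set (MulAut T) :=
  {f | (∀ x : T, x ^ 3 = 1 → f x = x) ↔ (∃ m : ℤ, ∀ x : T, x ^ p = 1 → f x = x ^ (m * m))}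

open scoped Classical in
/-- The orbits of `W₀` on `T`: the basic sets of `𝒜₀ = Cyc(W₀, T)`. -/
noncomputable def A0sets (p : ℕ) (T : Type*) [Group T] [Fintype T] [DecidableEq T] :
    Finset (Finset T) :=
  Finset.univ.image (fun g : T => Finset.univ.filter (fun x : T => ∃ f ∈ W0 p T, f g = x))

open scoped Classical in
/-- `Q`, the subgroup of order 3 of a cyclic group of order `3p`. -/
noncomputable def Qfin (T : Type*) [Group T] [Fintype T] : Finset T :=
  Finset.univ.filter (fun x => x ^ 3 = 1)

open scoped Classical in
/-- `R`, the subgroup of order `p` of a cyclic group of order `3p`. -/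
noncomputable def Rfin (p : ℕ) (T : Type*) [Group T] [Fintype T] : Finset T :=
  Finset.univ.filter (fun x => x ^ p = 1)

/-- Basic sets of `ℬ₁ = ℤQ ⊗ τ(R)`: the sets `{q}` and `q·R^#`, `q ∈ Q`. -/
noncomputable def B1sets (p : ℕ) (T : Type*) [CommGroup T] [Fintype T] [DecidableEq T] :
    Finset (Finset T) :=
  (Qfin T).image (fun q => ({q} : Finset T)) ∪
    (Qfin T).image (fun q => ((Rfin p T).erase 1).image (fun r => q * r))

open scoped Pointwise in
/-- Basic sets of `ℬ₂ = τ(Q) ⊗ τ(R)`: `{1}`, `Q^#`, `R^#`, `Q^#R^#`. -/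
noncomputable def B2sets (p : ℕ) (T : Type*) [CommGroup T] [Fintype T] [DecidableEq T] :
    Finset (Finset T) :=
  {{1}, (Qfin T).erase 1, (Rfin p T).erase 1, ((Qfin T).erase 1) * ((Rfin p T).erase 1)}

/-- Basic sets of `ℬ₃ = 𝒜₀` over `T`. -/
noncomputable def B3sets (p : ℕ) (T : Type*) [CommGroup T] [Fintype T] [DecidableEq T] :
    Finset (Finset T) :=
  A0sets p T

/-- The basic sets of the S-ring `𝒜ᵢ* = 𝒜₀ ≀_{U/L} ℬᵢ` over `G` (`|G| = 9p`, `L ≤ U ≤ G`,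
`|L| = 3`, `U` cyclic of order `3p`, so `G/L` is cyclic of order `3p`): the basic sets of
`𝒜₀` over `U` together with the full preimages under `G → G/L` of the basic sets of `ℬᵢ`
not contained in `U/L`. -/
noncomputable def AstarSets (p : ℕ) (G : Type*) [CommGroup G] [Fintype G] [DecidableEq G]
    (U L : Subgroup G) (Bsets : Finset (Finset (G ⧸ L))) : Finset (Finset G) :=
  letI : DecidablePred (· ∈ U) := Classical.decPred _
  letI : DecidableEq (G ⧸ L) := Classical.decEq _
  letI : Fintype (G ⧸ L) := Fintype.ofFinite _
  ((A0sets p ↥U).image (fun X => X.image (Subtype.val : ↥U → G))) ∪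
    ((Bsets.filter (fun Y =>
        ¬ Y ⊆ Finset.univ.filter (fun y => ∃ u ∈ U, (QuotientGroup.mk u : G ⧸ L) = y))).image
      (fun Y => Finset.univ.filter (fun g : G => (QuotientGroup.mk g : G ⧸ L) ∈ Y)))

/- ====================  AUXILIARY LEMMAS  ==================== -/

lemma structConst_eq_card {G : Type*} [Group G] [DecidableEq G] (X Y : Finset G) (z : G) :
    structConst X Y z = (X.filter fun a => a⁻¹ * z ∈ Y).card := by
  unfold structConst
  apply Finset.card_bij (fun q _ => q.1)
  · rintro ⟨a, b⟩ hq
    simp only [Finset.mem_filter, Finset.mem_product] at hq ⊢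
    exact ⟨hq.1.1, by rw [← hq.2]; simpa using hq.1.2⟩
  · rintro ⟨a, b⟩ ha ⟨c, d⟩ hc (h : a = c)
    simp only [Finset.mem_filter, Finset.mem_product] at ha hc
    subst h
    have : b = d := by
      have h1 := ha.2; have h2 := hc.2
      exact mul_left_cancel (h1.trans h2.symm)
    simp [this]
  · intro a ha
    simp only [Finset.mem_filter] at ha
    exact ⟨(a, a⁻¹ * z), by simp [Finset.mem_filter, ha.1, ha.2], rfl⟩

namespace SRing
variable {G G' : Type*} [Group G] [Fintype G] [DecidableEq G]
  [Group G'] [Fintype G'] [DecidableEq G']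

lemma sum_structConst (A : SRing G) (X : Finset G) (z : G) :
    ∑ Y ∈ A.basicSets, structConst X Y z = X.card := by
  have h1 : ∀ Y, structConst X Y z = ∑ a ∈ X, if a⁻¹ * z ∈ Y then 1 else 0 := by
    intro Y; rw [structConst_eq_card, Finset.card_filter]
  simp only [h1]
  rw [Finset.sum_comm]
  have h2 : ∀ a ∈ X, (∑ Y ∈ A.basicSets, if a⁻¹ * z ∈ Y then 1 else 0) = 1 := by
    intro a _
    rw [← Finset.card_filter]
    rw [Finset.card_eq_one]
    obtain ⟨Y₀, hY₀, hmem⟩ := A.exists_mem (a⁻¹ * z)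
    refine ⟨Y₀, ?_⟩
    ext Y
    simp only [Finset.mem_filter, Finset.mem_singleton]
    constructor
    · rintro ⟨hY, hm⟩
      by_contra hne
      exact Finset.disjoint_left.1 (A.disj Y hY Y₀ hY₀ hne) hm hmem
    · rintro rfl; exact ⟨hY₀, hmem⟩
  rw [Finset.sum_congr rfl h2, Finset.sum_const, smul_eq_mul, mul_one]

lemma IsAlgIso.card_image {A : SRing G} {B : SRing G'} {φ : Finset G → Finset G'}
    (h : A.IsAlgIso B φ) {X : Finset G} (hX : X ∈ A.basicSets) : (φ X).card = X.card := by
  obtain ⟨hbij, hsc⟩ := h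
  have h1B : φ {1} ∈ B.basicSets := hbij.mapsTo A.one_mem
  obtain ⟨u, hu⟩ := B.nonempty_mem _ h1B
  have key : ∀ Y ∈ A.basicSets, structConst X Y (1 : G) = structConst (φ X) (φ Y) u := by
    intro Y hY
    exact hsc X hX Y hY {1} A.one_mem 1 (Finset.mem_singleton_self 1) u hu
  have e1 : ∑ Y ∈ A.basicSets, structConst (φ X) (φ Y) u
      = ∑ Y' ∈ B.basicSets, structConst (φ X) Y' u := by
    apply Finset.sum_bij (fun Y _ => φ Y)
    · intro Y hY; exact hbij.mapsTo hY
    · intro Y hY Y' hY' hEq; exact hbij.injOn hY hY' hEq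
    · intro Y' hY'
      obtain ⟨Y, hY, hYe⟩ := hbij.surjOn hY'
      exact ⟨Y, hY, hYe⟩
    · intro Y hY; rfl
  calc (φ X).card = ∑ Y' ∈ B.basicSets, structConst (φ X) Y' u :=
        (B.sum_structConst _ u).symm
    _ = ∑ Y ∈ A.basicSets, structConst (φ X) (φ Y) u := e1.symm
    _ = ∑ Y ∈ A.basicSets, structConst X Y 1 :=
        Finset.sum_congr rfl (fun Y hY => (key Y hY).symm)
    _ = X.card := A.sum_structConst X 1

lemma IsAlgIso.count_card {A : SRing G} {B : SRing G'} {φ : Finset G → Finset G'}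
    (h : A.IsAlgIso B φ) (c : ℕ) :
    (A.basicSets.filter (fun Z => Z.card = c)).card
      = (B.basicSets.filter (fun Z => Z.card = c)).card := by
  apply Finset.card_bij (fun Z _ => φ Z)
  · intro Z hZ
    simp only [Finset.mem_filter] at hZ ⊢
    exact ⟨h.1.mapsTo hZ.1, by rw [h.card_image hZ.1, hZ.2]⟩
  · intro Z hZ Z' hZ' hEq
    simp only [Finset.mem_filter] at hZ hZ'
    exact h.1.injOn hZ.1 hZ'.1 hEq
  · intro Z' hZ'
    simp only [Finset.mem_filter] at hZ'
    obtain ⟨Z, hZ, hZe⟩ := h.1.surjOn hZ'.1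
    refine ⟨Z, ?_, hZe⟩
    simp only [Finset.mem_filter]
    exact ⟨hZ, by rw [← h.card_image hZ, hZe]; exact hZ'.2⟩
end SRing
/- ====================  GROUP-THEORETIC AUXILIARIES  ==================== -/

section Torsion
variable {T : Type*} [CommGroup T] [Fintype T]

/-- the `q`-torsion subgroup of a commutative group -/
def torSub (q : ℕ) (T : Type*) [CommGroup T] : Subgroup T where
  carrier := {x | x ^ q = 1}
  one_mem' := one_pow q
  mul_mem' := by
    intro a b ha hb
    simp only [Set.mem_setOf_eq] at *
    rw [mul_pow, ha, hb, one_mul]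
  inv_mem' := by
    intro a ha
    simp only [Set.mem_setOf_eq] at *
    rw [inv_pow, ha, inv_one]

omit [Fintype T] in
lemma mem_torSub (q : ℕ) (x : T) : x ∈ torSub q T ↔ x ^ q = 1 := Iff.rfl

lemma card_torsion (q r : ℕ) (hq : q.Prime) (hqr : ¬ q ∣ r)
    (hT : Fintype.card T = q * r) : Nat.card (torSub q T) = q := by
  haveI : Fact q.Prime := ⟨hq⟩
  have hpg : IsPGroup q (torSub q T) := by
    intro g
    exact ⟨1, by
      ext
      rw [pow_one]
      exact g.2⟩
  obtain ⟨n, hn⟩ := hpg.exists_card_eq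
  have hTn : Nat.card T = q * r := by rw [Nat.card_eq_fintype_card]; exact hT
  have hdvd : Nat.card (torSub q T) ∣ q * r :=
    hTn ▸ Subgroup.card_subgroup_dvd_card (torSub q T)
  obtain ⟨a, ha⟩ := exists_prime_orderOf_dvd_card q (hT ▸ dvd_mul_right q r)
  have haT : a ∈ torSub q T := by
    show a ^ q = 1
    rw [← ha]; exact pow_orderOf_eq_one a
  have hord : orderOf (⟨a, haT⟩ : torSub q T) = q := by
    have h := orderOf_injective (torSub q T).subtype Subtype.coe_injective ⟨a, haT⟩
    calc orderOf (⟨a, haT⟩ : torSub q T) = orderOf a := h.symm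
    _ = q := ha
  have hqcard : q ∣ Nat.card (torSub q T) := by
    have h5 := orderOf_dvd_natCard (⟨a, haT⟩ : torSub q T)
    rwa [hord] at h5
  have hn1 : n = 1 := by
    have hge : 1 ≤ n := by
      by_contra h
      push_neg at h
      interval_cases n
      rw [hn] at hqcard
      exact hq.one_lt.ne' (Nat.dvd_one.mp (by simpa using hqcard))
    have hlt : n < 2 := by
      by_contra h
      push_neg at h
      have h6 : q * q ∣ q * r := by
        refine dvd_trans ?_ (hn ▸ hdvd)
        calc q * q = q ^ 2 := (sq q).symm
        _ ∣ q ^ n := pow_dvd_pow q h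
      exact hqr ((mul_dvd_mul_iff_left hq.pos.ne').mp h6)
    omega
  rw [hn, hn1, pow_one]

/-- every element with `x ^ q = 1` lies in any subgroup of order `q` -/
lemma torSub_le (q r : ℕ) (hq : q.Prime) (hqr : ¬ q ∣ r)
    (hT : Fintype.card T = q * r) (H : Subgroup T) (hH : Nat.card H = q) :
    torSub q T ≤ H := by
  haveI : Fact q.Prime := ⟨hq⟩
  intro y hy
  set K := H ⊔ Subgroup.zpowers y with hK
  have hHp : IsPGroup q H := IsPGroup.of_card (by rw [hH, pow_one])
  have hyp : IsPGroup q (Subgroup.zpowers y) := by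
    intro g
    refine ⟨1, ?_⟩
    obtain ⟨k, hk⟩ := g.2
    ext
    show (g : T) ^ q ^ 1 = 1
    rw [pow_one, ← hk]
    rw [← zpow_natCast, ← zpow_mul, mul_comm, zpow_mul, zpow_natCast, hy, one_zpow]
  have hKp : IsPGroup q K := IsPGroup.to_sup_of_normal_right hHp hyp
  obtain ⟨n, hn⟩ := hKp.exists_card_eq
  have hTn : Nat.card T = q * r := by rw [Nat.card_eq_fintype_card]; exact hT
  have hdvd : Nat.card K ∣ q * r := hTn ▸ Subgroup.card_subgroup_dvd_card K
  have hle : Nat.card K ≤ q := by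
    rcases Nat.lt_or_ge n 2 with h2 | h2
    · rw [hn]
      calc q ^ n ≤ q ^ 1 := Nat.pow_le_pow_right hq.pos (by omega)
      _ = q := pow_one q
    · exfalso
      have h6 : q * q ∣ q * r := by
        refine dvd_trans ?_ (hn ▸ hdvd)
        calc q * q = q ^ 2 := (sq q).symm
        _ ∣ q ^ n := pow_dvd_pow q h2
      exact hqr ((mul_dvd_mul_iff_left hq.pos.ne').mp h6)
  have hHK : H = K := Subgroup.eq_of_le_of_card_ge le_sup_left (by rw [hH]; exact hle)
  rw [hHK]
  exact SetLike.le_def.mp le_sup_right (Subgroup.mem_zpowers y)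

lemma divisor_cases {p d : ℕ} (hp : p.Prime) (hp5 : 5 ≤ p) (hd : d ∣ 3 * p)
    (hnd : ¬ d ∣ p) : d = 3 ∨ d = 3 * p := by
  by_cases hpd : p ∣ d
  · obtain ⟨e, rfl⟩ := hpd
    have he : e ∣ 3 := by
      have h7 : p * e ∣ p * 3 := by rwa [mul_comm 3 p] at hd
      exact (mul_dvd_mul_iff_left (by omega : p ≠ 0)).mp h7
    rcases (Nat.prime_three).eq_one_or_self_of_dvd e he with rfl | rfl
    · exact absurd (by simpa using dvd_refl p) hnd
    · right; rw [mul_comm]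
  · have hco : Nat.Coprime d p := ((hp.coprime_iff_not_dvd.mpr hpd).symm : Nat.Coprime d p)
    have hd3 : d ∣ 3 := hco.dvd_of_dvd_mul_right hd
    rcases (Nat.prime_three).eq_one_or_self_of_dvd d hd3 with rfl | rfl
    · exact absurd (one_dvd p) hnd
    · left; rfl
end Torsion

/-- the power map as an automorphism of a finite commutative group -/
noncomputable def powAut {T : Type*} [CommGroup T] (k : ℕ) (h : (Nat.card T).Coprime k) :
    MulAut T :=
  { powCoprime h with map_mul' := fun x y => mul_pow x y k }

@[simp] lemma powAut_apply {T : Type*} [CommGroup T] (k : ℕ) (h : (Nat.card T).Coprime k)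
    (x : T) : powAut k h x = x ^ k := rfl

lemma one_mem_W0 (p : ℕ) (T : Type*) [Group T] : (1 : MulAut T) ∈ W0 p T := by
  constructor
  · intro _
    exact ⟨1, fun x _ => by simp⟩
  · intro _ x _
    rfl

lemma exists_nonsquare_nat (p : ℕ) (hp : p.Prime) (hp5 : 5 ≤ p) :
    ∃ b : ℕ, ¬ IsSquare ((b : ZMod p)) := by
  haveI : Fact p.Prime := ⟨hp⟩
  obtain ⟨n, hn⟩ := FiniteField.exists_nonsquare (F := ZMod p)
    (by rw [ZMod.ringChar_zmod_n]; omega)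
  refine ⟨n.val, ?_⟩
  rwa [ZMod.natCast_val, ZMod.cast_id]

lemma exists_crt_k (p : ℕ) (hp : p.Prime) (hp5 : 5 ≤ p) (s b : ℕ) (hs : s < 3) :
    ∃ k : ℕ, k % 3 = s ∧ (k : ZMod p) = (b : ZMod p) := by
  have hco : Nat.Coprime 3 p := (Nat.coprime_primes Nat.prime_three hp).mpr (by omega)
  obtain ⟨k, hk1, hk2⟩ := Nat.chineseRemainder hco s b
  refine ⟨k, ?_, ?_⟩
  · have : k % 3 = s % 3 := hk1
    omega
  · exact (ZMod.natCast_eq_natCast_iff k b p).mpr hk2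

lemma coprime_of_k (p k : ℕ) (hp : p.Prime) (h3 : ¬ k % 3 = 0) (hpk : (k : ZMod p) ≠ 0) :
    Nat.Coprime (3 * p) k := by
  haveI : Fact p.Prime := ⟨hp⟩
  refine Nat.Coprime.mul ?_ ?_
  · refine Nat.prime_three.coprime_iff_not_dvd.mpr (fun h => h3 ?_)
    omega
  · exact hp.coprime_iff_not_dvd.mpr (fun h => hpk ((ZMod.natCast_eq_zero_iff k p).mpr h))
section Key
variable {T : Type*} [CommGroup T] [Fintype T] {p : ℕ}

/-- A power `x ↦ x^k` with `k ≡ 2 (mod 3)` and `k` a nonresidue mod `p` lies in `W₀`. -/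
lemma powAut_mem_W0 (hp : p.Prime) (hp5 : 5 ≤ p) (hcardT : Fintype.card T = 3 * p)
    {b : ℕ} (hb : ¬ IsSquare ((b : ZMod p))) {k : ℕ} (hk3 : k % 3 = 2)
    (hkp : (k : ZMod p) = (b : ZMod p)) (hco : (Nat.card T).Coprime k) :
    powAut k hco ∈ W0 p T := by
  haveI : Fact p.Prime := ⟨hp⟩
  obtain ⟨a, ha⟩ := exists_prime_orderOf_dvd_card 3 (hcardT ▸ dvd_mul_right 3 p)
  obtain ⟨c, hc⟩ := exists_prime_orderOf_dvd_card p (hcardT ▸ dvd_mul_left p 3)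
  refine iff_of_false ?_ ?_
  · intro hL
    have ha3 : a ^ 3 = 1 := by rw [← ha]; exact pow_orderOf_eq_one a
    have h1 : a ^ k = a := hL a ha3
    have h2 : a ^ (k - 1) * a = a ^ k := by
      rw [← pow_succ]; congr 1; omega
    have h3 : a ^ (k - 1) = 1 := by
      rw [h1] at h2
      exact mul_right_cancel (h2.trans (one_mul a).symm)
    have h4 : orderOf a ∣ k - 1 := orderOf_dvd_of_pow_eq_one h3
    rw [ha] at h4
    omega
  · rintro ⟨m, hm⟩
    have hcp : c ^ p = 1 := by rw [← hc]; exact pow_orderOf_eq_one c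
    have h1 : c ^ k = c ^ (m * m) := hm c hcp
    have h2 : c ^ ((k : ℤ) - m * m) = 1 := by
      rw [zpow_sub, zpow_natCast, h1, mul_inv_cancel]
    have h3 : ((orderOf c : ℤ)) ∣ (k : ℤ) - m * m := orderOf_dvd_iff_zpow_eq_one.mpr h2
    rw [hc] at h3
    have h4 : (((k : ℤ) - m * m : ℤ) : ZMod p) = 0 :=
      (ZMod.intCast_zmod_eq_zero_iff_dvd _ p).mpr h3
    push_cast at h4
    exact hb ⟨(m : ZMod p), by rw [← hkp]; linear_combination h4⟩

/-- No element of `W₀` sends a generator `g` to `g^k₀` with `k₀ ≡ 1 (3)` a nonresidue mod `p`. -/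
lemma no_W0_pow (hp : p.Prime) (hcardT : Fintype.card T = 3 * p)
    {b : ℕ} (hb : ¬ IsSquare ((b : ZMod p))) {k₀ : ℕ} (hk3 : k₀ % 3 = 1)
    (hkp : (k₀ : ZMod p) = (b : ZMod p)) {g : T} (hg : orderOf g = 3 * p)
    {f : MulAut T} (hf : f ∈ W0 p T) (hfg : f g = g ^ k₀) : False := by
  haveI : Fact p.Prime := ⟨hp⟩
  have htop : Subgroup.zpowers g = ⊤ := by
    apply Subgroup.eq_top_of_card_eq
    rw [Nat.card_zpowers, hg, Nat.card_eq_fintype_card, hcardT]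
  have hgen : ∀ x : T, ∃ j : ℤ, g ^ j = x := by
    intro x
    have : x ∈ Subgroup.zpowers g := htop ▸ Subgroup.mem_top x
    exact this
  have hfx : ∀ x : T, f x = x ^ k₀ := by
    intro x
    obtain ⟨j, rfl⟩ := hgen x
    rw [map_zpow, hfg, ← zpow_natCast g k₀, ← zpow_mul, mul_comm, zpow_mul, zpow_natCast]
  have hL : ∀ x : T, x ^ 3 = 1 → f x = x := by
    intro x hx
    rw [hfx, show k₀ = 3 * (k₀ / 3) + 1 by omega, pow_add, pow_mul, hx, one_pow, one_mul,
      pow_one]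
  obtain ⟨m, hm⟩ := hf.mp hL
  obtain ⟨c, hc⟩ := exists_prime_orderOf_dvd_card p (hcardT ▸ dvd_mul_left p 3)
  have hcp : c ^ p = 1 := by rw [← hc]; exact pow_orderOf_eq_one c
  have h1 : c ^ k₀ = c ^ (m * m) := (hfx c).symm.trans (hm c hcp)
  have h2 : c ^ ((k₀ : ℤ) - m * m) = 1 := by
    rw [zpow_sub, zpow_natCast, h1, mul_inv_cancel]
  have h3 := orderOf_dvd_iff_zpow_eq_one.mpr h2
  rw [hc] at h3
  have h4 : (((k₀ : ℤ) - m * m : ℤ) : ZMod p) = 0 :=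
    (ZMod.intCast_zmod_eq_zero_iff_dvd _ p).mpr h3
  push_cast at h4
  exact hb ⟨(m : ZMod p), by rw [← hkp]; linear_combination h4⟩
end Key
section OrbitLemmas
variable {T : Type*} [CommGroup T] [Fintype T] [DecidableEq T] {p : ℕ}

lemma mem_Qfin (x : T) : x ∈ Qfin T ↔ x ^ 3 = 1 := by
  simp [Qfin]

lemma mem_Rfin (x : T) : x ∈ Rfin p T ↔ x ^ p = 1 := by
  simp [Rfin]

lemma mem_A0sets {X : Finset T} :
    X ∈ A0sets p T ↔ ∃ g : T, ∀ x : T, x ∈ X ↔ ∃ f ∈ W0 p T, f g = x := by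
  unfold A0sets
  simp only [Finset.mem_image, Finset.mem_univ, true_and]
  constructor
  · rintro ⟨g, rfl⟩
    exact ⟨g, fun x => by simp⟩
  · rintro ⟨g, hg⟩
    refine ⟨g, ?_⟩
    ext x
    simp [hg x]

lemma Qfin_card (hp : p.Prime) (hp5 : 5 ≤ p) (hcardT : Fintype.card T = 3 * p) :
    (Qfin T).card = 3 := by
  have h3p : ¬ (3 : ℕ) ∣ p := by
    intro h
    have := (Nat.prime_dvd_prime_iff_eq Nat.prime_three hp).mp h
    omega
  have h1 : Nat.card (torSub 3 T) = 3 := card_torsion 3 p Nat.prime_three h3p hcardT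
  calc (Qfin T).card = Fintype.card {x // x ∈ Qfin T} := (Fintype.card_coe _).symm
    _ = Nat.card {x // x ∈ Qfin T} := (Nat.card_eq_fintype_card).symm
    _ = Nat.card (torSub 3 T) :=
        Nat.card_congr (Equiv.subtypeEquivRight (fun x => by
          rw [mem_Qfin, ← mem_torSub]))
    _ = 3 := h1

lemma Rfin_card (hp : p.Prime) (hp5 : 5 ≤ p) (hcardT : Fintype.card T = 3 * p) :
    (Rfin p T).card = p := by
  have hp3 : ¬ p ∣ 3 := fun h => by
    have := Nat.le_of_dvd (by omega) h
    omega
  have h1 : Nat.card (torSub p T) = p :=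
    card_torsion p 3 hp hp3 (by rw [hcardT, mul_comm])
  calc (Rfin p T).card = Fintype.card {x // x ∈ Rfin p T} := (Fintype.card_coe _).symm
    _ = Nat.card {x // x ∈ Rfin p T} := (Nat.card_eq_fintype_card).symm
    _ = Nat.card (torSub p T) :=
        Nat.card_congr (Equiv.subtypeEquivRight (fun x => by
          rw [mem_Rfin, ← mem_torSub]))
    _ = p := h1

/-- orbits of `W₀` that contain an element outside `R` are not singletons -/
lemma orbit_card_ne_one (hp : p.Prime) (hp5 : 5 ≤ p) (hcardT : Fintype.card T = 3 * p)
    {X : Finset T} {g : T} (hchar : ∀ x : T, x ∈ X ↔ ∃ f ∈ W0 p T, f g = x)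
    (hy : ∃ y ∈ X, y ^ p ≠ 1) : X.card ≠ 1 := by
  obtain ⟨y, hyX, hyp1⟩ := hy
  obtain ⟨f, hfW, rfl⟩ := (hchar y).mp hyX
  have hgp : g ^ p ≠ 1 := fun h => hyp1 (by rw [← map_pow, h, map_one])
  have hdvd : orderOf g ∣ 3 * p := by
    rw [← hcardT]; exact orderOf_dvd_card
  have hndvd : ¬ orderOf g ∣ p := fun h => hgp (orderOf_dvd_iff_pow_eq_one.mp h)
  have h3d : 3 ∣ orderOf g := by
    rcases divisor_cases hp hp5 hdvd hndvd with h | h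
    · omega
    · exact h ▸ dvd_mul_right 3 p
  obtain ⟨b, hb⟩ := exists_nonsquare_nat p hp hp5
  obtain ⟨k, hk3, hkp⟩ := exists_crt_k p hp hp5 2 b (by omega)
  have hbz : (b : ZMod p) ≠ 0 := fun h => hb (h ▸ ⟨0, by simp⟩)
  have hco : (Nat.card T).Coprime k := by
    rw [Nat.card_eq_fintype_card, hcardT]
    exact coprime_of_k p k hp (by omega) (by rw [hkp]; exact hbz)
  have hfW2 := powAut_mem_W0 hp hp5 hcardT hb hk3 hkp hco
  have hgk : g ^ k ∈ X := (hchar _).mpr ⟨powAut k hco, hfW2, rfl⟩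
  have hgX : g ∈ X := (hchar g).mpr ⟨1, one_mem_W0 p T, rfl⟩
  have hne : g ^ k ≠ g := by
    intro h
    have h2 : g ^ (k - 1) * g = g ^ k := by
      rw [← pow_succ]; congr 1; omega
    have h3 : g ^ (k - 1) = 1 := by
      rw [h] at h2
      exact mul_right_cancel (h2.trans (one_mul g).symm)
    have h4 : orderOf g ∣ k - 1 := orderOf_dvd_of_pow_eq_one h3
    have h5 : (3 : ℕ) ∣ k - 1 := dvd_trans h3d h4
    omega
  intro hcard1
  obtain ⟨z, hz⟩ := Finset.card_eq_one.mp hcard1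
  rw [hz, Finset.mem_singleton] at hgk hgX
  exact hne (hgk.trans hgX.symm)

/-- orbits of `W₀` that contain an element outside `R` do not have cardinality `2(p-1)` -/
lemma orbit_card_ne_two (hp : p.Prime) (hp5 : 5 ≤ p) (hcardT : Fintype.card T = 3 * p)
    {X : Finset T} {g : T} (hchar : ∀ x : T, x ∈ X ↔ ∃ f ∈ W0 p T, f g = x)
    (hy : ∃ y ∈ X, y ^ p ≠ 1) : X.card ≠ 2 * (p - 1) := by
  classical
  obtain ⟨y, hyX, hyp1⟩ := hy
  obtain ⟨f, hfW, rfl⟩ := (hchar y).mp hyX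
  have hgp : g ^ p ≠ 1 := fun h => hyp1 (by rw [← map_pow, h, map_one])
  have hdvd : orderOf g ∣ 3 * p := by
    rw [← hcardT]; exact orderOf_dvd_card
  have hndvd : ¬ orderOf g ∣ p := fun h => hgp (orderOf_dvd_iff_pow_eq_one.mp h)
  have hordmem : ∀ x ∈ X, orderOf x = orderOf g := by
    intro x hx
    obtain ⟨f', _, rfl⟩ := (hchar x).mp hx
    exact orderOf_injective f'.toMonoidHom f'.injective g
  rcases divisor_cases hp hp5 hdvd hndvd with hd | hd
  · -- order 3 : X has at most 2 elements
    have h1X : (1 : T) ∉ X := by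
      intro h
      have := hordmem 1 h
      rw [orderOf_one] at this
      omega
    have hsub : X ⊆ (Qfin T).erase 1 := by
      intro x hx
      rw [Finset.mem_erase, mem_Qfin]
      refine ⟨fun h => h1X (h ▸ hx), ?_⟩
      rw [← hd, ← hordmem x hx]
      exact pow_orderOf_eq_one x
    have hcard2 : X.card ≤ 2 := by
      have := Finset.card_le_card hsub
      rw [Finset.card_erase_of_mem (by rw [mem_Qfin]; exact one_pow 3),
        Qfin_card hp hp5 hcardT] at this
      omega
    omega
  · -- order 3p : g is a generator
    obtain ⟨b, hb⟩ := exists_nonsquare_nat p hp hp5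
    obtain ⟨k₀, hk3, hkp⟩ := exists_crt_k p hp hp5 1 b (by omega)
    have hbz : (b : ZMod p) ≠ 0 := fun h => hb (h ▸ ⟨0, by simp⟩)
    have hco : Nat.Coprime (3 * p) k₀ :=
      coprime_of_k p k₀ hp (by omega) (by rw [hkp]; exact hbz)
    have hnotin : g ^ k₀ ∉ X := by
      intro hmem
      obtain ⟨f', hf'W, hf'g⟩ := (hchar _).mp hmem
      exact no_W0_pow hp hcardT hb hk3 hkp hd hf'W hf'g
    set E := Finset.univ.filter (fun x : T => orderOf x = 3 * p) with hE
    have hsub : X ⊆ E.erase (g ^ k₀) := by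
      intro x hx
      rw [Finset.mem_erase, hE, Finset.mem_filter]
      exact ⟨fun h => hnotin (h ▸ hx), Finset.mem_univ x, (hordmem x hx).trans hd⟩
    have hgE : g ^ k₀ ∈ E := by
      rw [hE, Finset.mem_filter]
      refine ⟨Finset.mem_univ _, ?_⟩
      rw [orderOf_pow, hd]
      rw [Nat.Coprime.gcd_eq_one hco, Nat.div_one]
    have hcyc : IsCyclic T := isCyclic_of_orderOf_eq_card g
      (by rw [hd, Nat.card_eq_fintype_card, hcardT])
    have hEcard : E.card = 2 * (p - 1) := by
      rw [hE, IsCyclic.card_orderOf_eq_totient (by rw [hcardT])]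
      rw [Nat.totient_mul ((Nat.coprime_primes Nat.prime_three hp).mpr (by omega)),
        Nat.totient_prime Nat.prime_three, Nat.totient_prime hp]
    have hle : X.card ≤ 2 * (p - 1) - 1 := by
      have := Finset.card_le_card hsub
      rwa [Finset.card_erase_of_mem hgE, hEcard] at this
    omega
end OrbitLemmas
section CountLemmas
variable {T : Type*} [CommGroup T] [Fintype T] [DecidableEq T] {p : ℕ}

lemma eq_one_of_pow3_powp (hp : p.Prime) (hp5 : 5 ≤ p) {q : T}
    (h3 : q ^ 3 = 1) (hqp : q ^ p = 1) : q = 1 := by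
  have hco : Nat.Coprime 3 p := (Nat.coprime_primes Nat.prime_three hp).mpr (by omega)
  have hdvd : orderOf q ∣ 1 := by
    rw [← hco]
    exact Nat.dvd_gcd (orderOf_dvd_of_pow_eq_one h3) (orderOf_dvd_of_pow_eq_one hqp)
  rw [← orderOf_eq_one_iff]
  exact Nat.dvd_one.mp hdvd

lemma pow_p_ne_one_of_Q (hp : p.Prime) (hp5 : 5 ≤ p) {q : T}
    (h3 : q ^ 3 = 1) (h1 : q ≠ 1) : q ^ p ≠ 1 :=
  fun h => h1 (eq_one_of_pow3_powp hp hp5 h3 h)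

lemma Qfin_erase_card (hp : p.Prime) (hp5 : 5 ≤ p) (hcardT : Fintype.card T = 3 * p) :
    ((Qfin T).erase 1).card = 2 := by
  rw [Finset.card_erase_of_mem (by rw [mem_Qfin]; exact one_pow 3),
    Qfin_card hp hp5 hcardT]

lemma Rfin_erase_card (hp : p.Prime) (hp5 : 5 ≤ p) (hcardT : Fintype.card T = 3 * p) :
    ((Rfin p T).erase 1).card = p - 1 := by
  rw [Finset.card_erase_of_mem (by rw [mem_Rfin]; exact one_pow p),
    Rfin_card hp hp5 hcardT]

open scoped Pointwise in
lemma QR_card (hp : p.Prime) (hp5 : 5 ≤ p) (hcardT : Fintype.card T = 3 * p) :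
    (((Qfin T).erase 1) * ((Rfin p T).erase 1)).card = 2 * (p - 1) := by
  have hinj : Set.InjOn (fun z : T × T => z.1 * z.2)
      ((((Qfin T).erase 1) : Set T) ×ˢ (((Rfin p T).erase 1) : Set T)) := by
    rintro ⟨q, r⟩ hqr ⟨q', r'⟩ hq'r' h
    simp only [Set.mem_prod, Finset.mem_coe, Finset.mem_erase, mem_Qfin, mem_Rfin] at hqr hq'r'
    obtain ⟨⟨hq1, hq3⟩, hr1, hrp⟩ := hqr
    obtain ⟨⟨hq'1, hq'3⟩, hr'1, hr'p⟩ := hq'r'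
    have h' : q * r = q' * r' := h
    have hw : q * q'⁻¹ = r' * r⁻¹ := by
      have h2 : (q * r) * (q'⁻¹ * r⁻¹) = (q' * r') * (q'⁻¹ * r⁻¹) := by rw [h']
      calc q * q'⁻¹ = (q * r) * (q'⁻¹ * r⁻¹) := by
            rw [mul_comm q'⁻¹ r⁻¹]; group
      _ = (q' * r') * (q'⁻¹ * r⁻¹) := h2
      _ = r' * r⁻¹ := by
          rw [mul_comm q' r', mul_assoc r' q' (q'⁻¹ * r⁻¹)]; group
    have hw3 : (q * q'⁻¹) ^ 3 = 1 := by
      rw [mul_pow, inv_pow, hq3, hq'3, inv_one, mul_one]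
    have hwp : (q * q'⁻¹) ^ p = 1 := by
      rw [hw, mul_pow, inv_pow, hrp, hr'p, inv_one, mul_one]
    have hw1 : q * q'⁻¹ = 1 := eq_one_of_pow3_powp hp hp5 hw3 hwp
    have hqq : q = q' := by
      rwa [mul_inv_eq_one] at hw1
    have hrr : r = r' := by
      subst hqq
      exact mul_left_cancel h'
    simp [hqq, hrr]
  have h := Finset.card_mul_iff.mpr hinj
  rw [h, Qfin_erase_card hp hp5 hcardT, Rfin_erase_card hp hp5 hcardT]

lemma B1_count (hp : p.Prime) (hp5 : 5 ≤ p) (hcardT : Fintype.card T = 3 * p) :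
    ((B1sets p T).filter (fun Y => ¬ Y ⊆ Rfin p T ∧ 3 * Y.card = 3)).card = 2 := by
  have hfe : (B1sets p T).filter (fun Y => ¬ Y ⊆ Rfin p T ∧ 3 * Y.card = 3)
      = ((Qfin T).erase 1).image (fun q => ({q} : Finset T)) := by
    ext Y
    simp only [B1sets, Finset.mem_filter, Finset.mem_union, Finset.mem_image,
      Finset.mem_erase]
    constructor
    · rintro ⟨hY | hY, hns, hc3⟩
      · obtain ⟨q, hq, rfl⟩ := hY
        refine ⟨q, ⟨?_, hq⟩, rfl⟩
        rintro rfl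
        exact hns (Finset.singleton_subset_iff.mpr ((mem_Rfin (1 : T)).mpr (one_pow p)))
      · obtain ⟨q, hq, rfl⟩ := hY
        exfalso
        rw [Finset.card_image_of_injective _ (fun a b hab => mul_left_cancel hab),
          Rfin_erase_card hp hp5 hcardT] at hc3
        omega
    · rintro ⟨q, ⟨hq1, hqQ⟩, rfl⟩
      refine ⟨Or.inl ⟨q, hqQ, rfl⟩, ?_, by simp⟩
      intro hsub
      have hqR := (mem_Rfin q).mp (hsub (Finset.mem_singleton_self q))
      exact hq1 (eq_one_of_pow3_powp hp hp5 ((mem_Qfin q).mp hqQ) hqR)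
  rw [hfe, Finset.card_image_of_injective _ (fun a b hab => Finset.singleton_injective hab),
    Qfin_erase_card hp hp5 hcardT]

lemma B1_count6 (hp : p.Prime) (hp5 : 5 ≤ p) (hcardT : Fintype.card T = 3 * p) :
    ((B1sets p T).filter (fun Y => ¬ Y ⊆ Rfin p T ∧ 3 * Y.card = 6 * (p - 1))).card = 0 := by
  rw [Finset.card_eq_zero, Finset.filter_eq_empty_iff]
  intro Y hY
  rintro ⟨-, hc⟩
  simp only [B1sets, Finset.mem_union, Finset.mem_image] at hY
  rcases hY with ⟨q, hq, rfl⟩ | ⟨q, hq, rfl⟩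
  · rw [Finset.card_singleton] at hc
    omega
  · rw [Finset.card_image_of_injective _ (fun a b hab => mul_left_cancel hab),
      Rfin_erase_card hp hp5 hcardT] at hc
    omega

open scoped Pointwise in
lemma B2_count (hp : p.Prime) (hp5 : 5 ≤ p) (hcardT : Fintype.card T = 3 * p) :
    ((B2sets p T).filter (fun Y => ¬ Y ⊆ Rfin p T ∧ 3 * Y.card = 3)).card = 0 := by
  rw [Finset.card_eq_zero, Finset.filter_eq_empty_iff]
  intro Y hY
  rintro ⟨hns, hc⟩
  simp only [B2sets, Finset.mem_insert, Finset.mem_singleton] at hY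
  rcases hY with rfl | rfl | rfl | rfl
  · exact hns (Finset.singleton_subset_iff.mpr ((mem_Rfin (1 : T)).mpr (one_pow p)))
  · rw [Qfin_erase_card hp hp5 hcardT] at hc; omega
  · rw [Rfin_erase_card hp hp5 hcardT] at hc; omega
  · rw [QR_card hp hp5 hcardT] at hc; omega

open scoped Pointwise in
lemma B2_count6 (hp : p.Prime) (hp5 : 5 ≤ p) (hcardT : Fintype.card T = 3 * p) :
    1 ≤ ((B2sets p T).filter
      (fun Y => ¬ Y ⊆ Rfin p T ∧ 3 * Y.card = 6 * (p - 1))).card := by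
  rw [Nat.one_le_iff_ne_zero, ← Nat.pos_iff_ne_zero, Finset.card_pos]
  refine ⟨((Qfin T).erase 1) * ((Rfin p T).erase 1), ?_⟩
  rw [Finset.mem_filter]
  refine ⟨by simp [B2sets], ?_, ?_⟩
  · obtain ⟨q, hq⟩ := Finset.card_pos.mp (by rw [Qfin_erase_card hp hp5 hcardT]; omega)
    obtain ⟨r, hr⟩ := Finset.card_pos.mp (by rw [Rfin_erase_card hp hp5 hcardT]; omega)
    intro hsub
    have hmem := hsub (Finset.mul_mem_mul hq hr)
    rw [mem_Rfin] at hmem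
    rw [Finset.mem_erase, mem_Qfin] at hq
    rw [Finset.mem_erase, mem_Rfin] at hr
    have : (q * r) ^ p = q ^ p := by
      rw [mul_pow, hr.2, mul_one]
    rw [this] at hmem
    exact pow_p_ne_one_of_Q hp hp5 hq.2 hq.1 hmem
  · rw [QR_card hp hp5 hcardT]
    ring
lemma B3_count (hp : p.Prime) (hp5 : 5 ≤ p) (hcardT : Fintype.card T = 3 * p) :
    ((A0sets p T).filter (fun Y => ¬ Y ⊆ Rfin p T ∧ 3 * Y.card = 3)).card = 0 := by
  rw [Finset.card_eq_zero, Finset.filter_eq_empty_iff]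
  intro Y hY
  rintro ⟨hns, hc⟩
  obtain ⟨g, hchar⟩ := mem_A0sets.mp hY
  obtain ⟨y, hyY, hyR⟩ := Finset.not_subset.mp hns
  rw [mem_Rfin] at hyR
  exact orbit_card_ne_one hp hp5 hcardT hchar ⟨y, hyY, hyR⟩ (by omega)

lemma B3_count6 (hp : p.Prime) (hp5 : 5 ≤ p) (hcardT : Fintype.card T = 3 * p) :
    ((A0sets p T).filter
      (fun Y => ¬ Y ⊆ Rfin p T ∧ 3 * Y.card = 6 * (p - 1))).card = 0 := by
  rw [Finset.card_eq_zero, Finset.filter_eq_empty_iff]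
  intro Y hY
  rintro ⟨hns, hc⟩
  obtain ⟨g, hchar⟩ := mem_A0sets.mp hY
  obtain ⟨y, hyY, hyR⟩ := Finset.not_subset.mp hns
  rw [mem_Rfin] at hyR
  exact orbit_card_ne_two hp hp5 hcardT hchar ⟨y, hyY, hyR⟩ (by omega)
end CountLemmas
section Glue
variable {p : ℕ} {G : Type*} [CommGroup G] [Fintype G] [DecidableEq G]

/-- full preimage of a subset of the quotient -/
noncomputable def preim (G : Type*) [CommGroup G] [Fintype G] (L : Subgroup G)
    [DecidableEq (G ⧸ L)] (Y : Finset (G ⧸ L)) : Finset G :=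
  Finset.univ.filter (fun g : G => (QuotientGroup.mk g : G ⧸ L) ∈ Y)

/-- the part of the basic sets of `𝒜ᵢ*` coming from `𝒜₀` over `U` -/
noncomputable def P1fin (p : ℕ) (G : Type*) [CommGroup G] [Fintype G] [DecidableEq G]
    (U : Subgroup G) : Finset (Finset G) :=
  letI : DecidablePred (· ∈ U) := Classical.decPred _
  (A0sets p ↥U).image (fun X => X.image (Subtype.val : ↥U → G))

variable {U L : Subgroup G} [Fintype (G ⧸ L)] [DecidableEq (G ⧸ L)]

lemma quotient_card (hcard : Fintype.card G = 9 * p) (hL3 : Nat.card L = 3) :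
    Fintype.card (G ⧸ L) = 3 * p := by
  have h := Subgroup.card_eq_card_quotient_mul_card_subgroup L
  rw [Nat.card_eq_fintype_card, hcard, hL3] at h
  rw [← Nat.card_eq_fintype_card]
  omega

lemma hS_iff (hp : p.Prime) (hp5 : 5 ≤ p) (hcard : Fintype.card G = 9 * p)
    (hLU : L ≤ U) (hL3 : Nat.card L = 3) (hU3p : Nat.card U = 3 * p) :
    ∀ y : G ⧸ L, (∃ u ∈ U, (QuotientGroup.mk u : G ⧸ L) = y) ↔ y ^ p = 1 := by
  set f : ↥U →* G ⧸ L := (QuotientGroup.mk' L).comp U.subtype with hf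
  have hfapp : ∀ u : ↥U, f u = (QuotientGroup.mk (u : G) : G ⧸ L) := fun u => rfl
  have hker : f.ker = L.subgroupOf U := by
    ext u
    rw [MonoidHom.mem_ker, Subgroup.mem_subgroupOf, hfapp]
    exact QuotientGroup.eq_one_iff _
  have hkcard : Nat.card f.ker = 3 := by
    rw [hker, Nat.card_congr (Subgroup.subgroupOfEquivOfLe hLU).toEquiv, hL3]
  have hUc : Nat.card ↥U = Nat.card (↥U ⧸ f.ker) * Nat.card f.ker :=
    Subgroup.card_eq_card_quotient_mul_card_subgroup f.ker
  have hqr : Nat.card (↥U ⧸ f.ker) = Nat.card f.range :=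
    Nat.card_congr (QuotientGroup.quotientKerEquivRange f).toEquiv
  have hrange : Nat.card f.range = p := by
    rw [hU3p, hqr, hkcard] at hUc
    omega
  intro y
  constructor
  · rintro ⟨u, hu, rfl⟩
    have hyr : (QuotientGroup.mk u : G ⧸ L) ∈ f.range := ⟨⟨u, hu⟩, rfl⟩
    have h1 := pow_card_eq_one' (G := f.range) (x := ⟨_, hyr⟩)
    rw [hrange] at h1
    have h2 := congrArg (Subgroup.subtype f.range) h1
    simpa using h2
  · intro hyp1
    have hy : y ∈ torSub p (G ⧸ L) := hyp1
    have hp3 : ¬ p ∣ 3 := fun h => by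
      have := Nat.le_of_dvd (by omega) h
      omega
    have hle := torSub_le p 3 hp hp3
      (by rw [quotient_card hcard hL3, mul_comm]) f.range hrange
    obtain ⟨⟨u, hu⟩, hu2⟩ := hle hy
    exact ⟨u, hu, hu2⟩

lemma preim_card (hL3 : Nat.card L = 3) (Y : Finset (G ⧸ L)) :
    (preim G L Y).card = 3 * Y.card := by
  unfold preim
  rw [Finset.card_eq_sum_card_fiberwise
    (s := Finset.univ.filter (fun g : G => (QuotientGroup.mk g : G ⧸ L) ∈ Y))
    (f := fun g : G => (QuotientGroup.mk g : G ⧸ L)) (t := Y)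
    (fun g hg => (Finset.mem_filter.mp hg).2)]
  have hfiber : ∀ y ∈ Y,
      ((Finset.univ.filter (fun g : G => (QuotientGroup.mk g : G ⧸ L) ∈ Y)).filter
        (fun g => (QuotientGroup.mk g : G ⧸ L) = y)).card = 3 := by
    intro y hy
    have he : (Finset.univ.filter (fun g : G => (QuotientGroup.mk g : G ⧸ L) ∈ Y)).filter
        (fun g => (QuotientGroup.mk g : G ⧸ L) = y)
        = Finset.univ.filter (fun g : G => (QuotientGroup.mk g : G ⧸ L) = y) := by
      ext g
      simp only [Finset.mem_filter, Finset.mem_univ, true_and]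
      exact ⟨fun h => h.2, fun h => ⟨h ▸ hy, h⟩⟩
    rw [he]
    obtain ⟨g₀, hg₀⟩ := QuotientGroup.mk_surjective y
    have e : ↥L ≃ {g : G // (QuotientGroup.mk g : G ⧸ L) = y} :=
      { toFun := fun l => ⟨g₀ * l, by
          rw [QuotientGroup.mk_mul, (QuotientGroup.eq_one_iff (l : G)).mpr l.2, hg₀, mul_one]⟩
        invFun := fun g => ⟨g₀⁻¹ * g, by
          rw [← QuotientGroup.eq_one_iff, QuotientGroup.mk_mul, QuotientGroup.mk_inv, hg₀,
            g.2, inv_mul_cancel]⟩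
        left_inv := fun l => by
          ext
          simp
        right_inv := fun g => by
          ext
          simp }
    calc (Finset.univ.filter (fun g : G => (QuotientGroup.mk g : G ⧸ L) = y)).card
        = Fintype.card {g : G // (QuotientGroup.mk g : G ⧸ L) = y} :=
          (Fintype.card_subtype _).symm
    _ = Nat.card {g : G // (QuotientGroup.mk g : G ⧸ L) = y} :=
          (Nat.card_eq_fintype_card).symm
    _ = Nat.card ↥L := (Nat.card_congr e).symm
    _ = 3 := hL3
  rw [Finset.sum_congr rfl hfiber, Finset.sum_const, smul_eq_mul]
  ring

lemma preim_inj : Function.Injective (preim G L) := by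
  intro Y Y' h
  ext y
  obtain ⟨g, rfl⟩ := QuotientGroup.mk_surjective y
  have h1 : g ∈ preim G L Y ↔ g ∈ preim G L Y' := by rw [h]
  simpa [preim] using h1

lemma mem_P1 {Z : Finset G} : Z ∈ P1fin p G U ↔
    ∃ X : Finset ↥U, (∃ g : ↥U, ∀ x, x ∈ X ↔ ∃ f ∈ W0 p ↥U, f g = x)
      ∧ X.image (Subtype.val : ↥U → G) = Z := by
  letI : DecidablePred (· ∈ U) := Classical.decPred _
  unfold P1fin
  simp only [Finset.mem_image]
  constructor
  · rintro ⟨X, hX, h⟩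
    exact ⟨X, mem_A0sets.mp hX, h⟩
  · rintro ⟨X, hX, h⟩
    exact ⟨X, mem_A0sets.mpr hX, h⟩

lemma P1_subset_U {Z : Finset G} (hZ : Z ∈ P1fin p G U) : ∀ g ∈ Z, g ∈ U := by
  obtain ⟨X, -, rfl⟩ := mem_P1.mp hZ
  intro g hg
  obtain ⟨x, -, rfl⟩ := Finset.mem_image.mp hg
  exact x.2

lemma AstarSets_eq (hp : p.Prime) (hp5 : 5 ≤ p) (hcard : Fintype.card G = 9 * p)
    (hLU : L ≤ U) (hL3 : Nat.card L = 3) (hU3p : Nat.card U = 3 * p)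
    (Bs : Finset (Finset (G ⧸ L))) :
    AstarSets p G U L Bs
      = P1fin p G U ∪ (Bs.filter (fun Y => ¬ Y ⊆ Rfin p (G ⧸ L))).image (preim G L) := by
  have hS := hS_iff hp hp5 hcard hLU hL3 hU3p
  letI : DecidablePred (· ∈ U) := Classical.decPred _
  ext Z
  have hinst : (Fintype.ofFinite (G ⧸ L)) = ‹Fintype (G ⧸ L)› := Subsingleton.elim _ _
  have hdec : (Classical.decEq (G ⧸ L)) = ‹DecidableEq (G ⧸ L)› := Subsingleton.elim _ _
  simp only [AstarSets, preim, Rfin, Finset.mem_union, Finset.mem_image, Finset.mem_filter,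
    hinst, hdec, Finset.filter_congr_decidable, Finset.subset_iff, Finset.mem_univ, true_and]
  constructor
  · rintro (⟨X, hX, h⟩ | ⟨Y, ⟨hYB, hYns⟩, h⟩)
    · exact Or.inl (mem_P1.mpr ⟨X, mem_A0sets.mp hX, h⟩)
    · refine Or.inr ⟨Y, ⟨hYB, fun hall => hYns (fun y hy => (hS y).mpr (hall hy))⟩, ?_⟩
      rw [← h]
      ext g
      simp
  · rintro (hZ | ⟨Y, ⟨hYB, hYns⟩, h⟩)
    · obtain ⟨X, hX, h⟩ := mem_P1.mp hZ
      exact Or.inl ⟨X, mem_A0sets.mpr hX, h⟩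
    · refine Or.inr ⟨Y, ⟨hYB, fun hall => hYns (fun y hy => (hS y).mp (hall hy))⟩, ?_⟩
      rw [← h]
      ext g
      simp

lemma cnt_formula (hp : p.Prime) (hp5 : 5 ≤ p) (hcard : Fintype.card G = 9 * p)
    (hLU : L ≤ U) (hL3 : Nat.card L = 3) (hU3p : Nat.card U = 3 * p)
    (Bs : Finset (Finset (G ⧸ L))) (c : ℕ) :
    ((AstarSets p G U L Bs).filter (fun Z => Z.card = c)).card
      = ((P1fin p G U).filter (fun Z => Z.card = c)).card
        + (Bs.filter (fun Y => ¬ Y ⊆ Rfin p (G ⧸ L) ∧ 3 * Y.card = c)).card := by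
  have hS := hS_iff hp hp5 hcard hLU hL3 hU3p
  rw [AstarSets_eq hp hp5 hcard hLU hL3 hU3p, Finset.filter_union,
    Finset.card_union_of_disjoint]
  · congr 1
    rw [Finset.filter_image, Finset.card_image_of_injective _ preim_inj,
      Finset.filter_filter]
    congr 1
    apply Finset.filter_congr
    intro Y _
    simp [preim_card hL3]
  · apply Finset.disjoint_filter_filter
    rw [Finset.disjoint_left]
    intro Z hZ1 hZ2
    obtain ⟨Y, hY, rfl⟩ := Finset.mem_image.mp hZ2
    obtain ⟨hYB, hYns⟩ := Finset.mem_filter.mp hY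
    obtain ⟨y, hyY, hyR⟩ := Finset.not_subset.mp hYns
    obtain ⟨g, rfl⟩ := QuotientGroup.mk_surjective y
    have hgZ : g ∈ preim G L Y := by simp [preim, hyY]
    have hgU := P1_subset_U hZ1 g hgZ
    apply hyR
    rw [mem_Rfin]
    exact (hS _).mp ⟨g, hgU, rfl⟩
end Glue

/-- For `p ≥ 5` prime and `G` abelian of order `9p`, the S-rings `𝒜₁*`, `𝒜₂*`, `𝒜₃*`
over `G` are pairwise non algebraically isomorphic. -/
theorem stmt19 (p : ℕ) (hp : p.Prime) (hp5 : 5 ≤ p)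
    (G : Type) [CommGroup G] [Fintype G] [DecidableEq G]
    (hcard : Fintype.card G = 9 * p)
    (U L : Subgroup G) (hLU : L ≤ U)
    (hL3 : Nat.card L = 3) (hU3p : Nat.card U = 3 * p) (hUcyc : IsCyclic ↥U)
    [Fintype (G ⧸ L)] [DecidableEq (G ⧸ L)]
    (A₁ A₂ A₃ : SRing G)
    (h₁ : A₁.basicSets = AstarSets p G U L (B1sets p (G ⧸ L)))
    (h₂ : A₂.basicSets = AstarSets p G U L (B2sets p (G ⧸ L)))
    (h₃ : A₃.basicSets = AstarSets p G U L (B3sets p (G ⧸ L))) :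
    (¬ ∃ φ, A₁.IsAlgIso A₂ φ) ∧ (¬ ∃ φ, A₂.IsAlgIso A₁ φ) ∧
    (¬ ∃ φ, A₁.IsAlgIso A₃ φ) ∧ (¬ ∃ φ, A₃.IsAlgIso A₁ φ) ∧
    (¬ ∃ φ, A₂.IsAlgIso A₃ φ) ∧ (¬ ∃ φ, A₃.IsAlgIso A₂ φ) := by
  have hcT : Fintype.card (G ⧸ L) = 3 * p := quotient_card hcard hL3
  have hA1c3 : ((A₁.basicSets).filter (fun Z => Z.card = 3)).card
      = ((P1fin p G U).filter (fun Z => Z.card = 3)).card + 2 := by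
    rw [h₁, cnt_formula hp hp5 hcard hLU hL3 hU3p, B1_count hp hp5 hcT]
  have hA2c3 : ((A₂.basicSets).filter (fun Z => Z.card = 3)).card
      = ((P1fin p G U).filter (fun Z => Z.card = 3)).card := by
    rw [h₂, cnt_formula hp hp5 hcard hLU hL3 hU3p, B2_count hp hp5 hcT, add_zero]
  have hA3c3 : ((A₃.basicSets).filter (fun Z => Z.card = 3)).card
      = ((P1fin p G U).filter (fun Z => Z.card = 3)).card := by
    rw [h₃, cnt_formula hp hp5 hcard hLU hL3 hU3p]
    simp only [B3sets]
    rw [B3_count hp hp5 hcT, add_zero]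
  have hA1c6 : ((A₁.basicSets).filter (fun Z => Z.card = 6 * (p - 1))).card
      = ((P1fin p G U).filter (fun Z => Z.card = 6 * (p - 1))).card := by
    rw [h₁, cnt_formula hp hp5 hcard hLU hL3 hU3p, B1_count6 hp hp5 hcT, add_zero]
  have hA3c6 : ((A₃.basicSets).filter (fun Z => Z.card = 6 * (p - 1))).card
      = ((P1fin p G U).filter (fun Z => Z.card = 6 * (p - 1))).card := by
    rw [h₃, cnt_formula hp hp5 hcard hLU hL3 hU3p]
    simp only [B3sets]
    rw [B3_count6 hp hp5 hcT, add_zero]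
  have hA2c6 : ((P1fin p G U).filter (fun Z => Z.card = 6 * (p - 1))).card + 1
      ≤ ((A₂.basicSets).filter (fun Z => Z.card = 6 * (p - 1))).card := by
    rw [h₂, cnt_formula hp hp5 hcard hLU hL3 hU3p]
    have h := B2_count6 (T := G ⧸ L) hp hp5 hcT
    omega
  refine ⟨?_, ?_, ?_, ?_, ?_, ?_⟩
  · rintro ⟨φ, hφ⟩
    have h := hφ.count_card 3
    omega
  · rintro ⟨φ, hφ⟩
    have h := hφ.count_card 3
    omega
  · rintro ⟨φ, hφ⟩
    have h := hφ.count_card 3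
    omega
  · rintro ⟨φ, hφ⟩
    have h := hφ.count_card 3
    omega
  · rintro ⟨φ, hφ⟩
    have h := hφ.count_card (6 * (p - 1))
    omega
  · rintro ⟨φ, hφ⟩
    have h := hφ.count_card (6 * (p - 1))
    omega
end
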